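/- arXiv:1011.2591 — 8 statements merged into one kernel-verified Lean document; each statement's English description precedes it below -/
import Mathlib

section
/- For n ≥ 1 and q ≥ 2, the edge clique cover number of the Hamming graph H(n,q) equals n·q^{n-1}. -/
/-- The Hamming graph H(n,q): vertices are n-tuples over [q],
adjacent iff Hamming distance is 1. -/
def hamming (n q : ℕ) : SimpleGraph (Fin n → Fin q) where
  Adj x y := hammingDist x y = 1
  symm := ⟨fun x y h => (hammingDist_comm y x).trans h⟩
  loopless := ⟨fun x h => by simp [hammingDist_self] at h⟩

/-- The edge clique cover number: minimum size of a family of cliques covering all edges. -/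
noncomputable def eccNum {V : Type*} (G : SimpleGraph V) : ℕ :=
  sInf {m | ∃ F : Finset (Set V), F.card = m ∧ (∀ S ∈ F, G.IsClique S) ∧
    ∀ x y, G.Adj x y → ∃ S ∈ F, x ∈ S ∧ y ∈ S}

namespace HammingECC

variable {n q : ℕ}

/-- The line through `a` in direction `i`. -/
def line (i : Fin n) (a : Fin n → Fin q) : Set (Fin n → Fin q) :=
  {x | ∀ j, j ≠ i → x j = a j}

lemma dist_one_iff {x y : Fin n → Fin q} :
    hammingDist x y = 1 ↔ ∃ i, x i ≠ y i ∧ ∀ j, j ≠ i → x j = y j := by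
  rw [hammingDist, Finset.card_eq_one]
  constructor
  · rintro ⟨i, hi⟩
    refine ⟨i, ?_, ?_⟩
    · have : i ∈ Finset.univ.filter fun j => x j ≠ y j := hi ▸ Finset.mem_singleton_self i
      simpa using this
    · intro j hj
      by_contra h
      have : j ∈ Finset.univ.filter fun j => x j ≠ y j := by simp [h]
      rw [hi, Finset.mem_singleton] at this
      exact hj this
  · rintro ⟨i, h1, h2⟩
    refine ⟨i, ?_⟩
    ext j
    simp only [Finset.mem_filter, Finset.mem_univ, true_and, Finset.mem_singleton]
    constructor
    · intro h; by_contra hj; exact h (h2 j hj)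
    · rintro rfl; exact h1

lemma clique_subset_line {S : Set (Fin n → Fin q)} (hS : (hamming n q).IsClique S)
    {x y : Fin n → Fin q} (hx : x ∈ S) (hy : y ∈ S) {i : Fin n}
    (hne : x i ≠ y i) (hagr : ∀ j, j ≠ i → x j = y j) :
    ∀ z ∈ S, ∀ j, j ≠ i → z j = x j := by
  intro z hz j hj
  by_cases hzx : z = x
  · rw [hzx]
  by_cases hzy : z = y
  · rw [hzy]; exact (hagr j hj).symm
  have h1 : hammingDist z x = 1 := hS hz hx hzx
  have h2 : hammingDist z y = 1 := hS hz hy hzy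
  by_contra hne'
  obtain ⟨k, hk1, hk2⟩ := dist_one_iff.mp h1
  have hkj : k = j := by
    by_contra h
    exact hne' (hk2 j (fun hh => h hh.symm))
  have hzi : z i = x i := hk2 i (fun h => hj (h.trans hkj).symm)
  obtain ⟨k', hk1', hk2'⟩ := dist_one_iff.mp h2
  have hzi' : z i ≠ y i := hzi ▸ hne
  have hzj' : z j ≠ y j := fun h => hne' (h.trans (hagr j hj).symm)
  have hi' : i = k' := by_contra fun h => hzi' (hk2' i h)
  have hj'' : j = k' := by_contra fun h => hzj' (hk2' j h)
  exact hj (hj''.trans hi'.symm)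

lemma line_isClique (i : Fin n) (a : Fin n → Fin q) :
    (hamming n q).IsClique (line i a) := by
  intro x hx y hy hxy
  show hammingDist x y = 1
  refine dist_one_iff.mpr ⟨i, ?_, fun j hj => (hx j hj).trans (hy j hj).symm⟩
  by_contra h
  apply hxy
  funext j
  by_cases hj : j = i
  · subst hj; exact h
  · exact (hx j hj).trans (hy j hj).symm

lemma card_fix (i : Fin n) (z : Fin q) :
    Fintype.card {a : Fin n → Fin q // a i = z} = q ^ (n - 1) := by
  have e : {a : Fin n → Fin q // a i = z} ≃ ({j : Fin n // j ≠ i} → Fin q) :=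
    { toFun := fun a j => a.1 j.1
      invFun := fun g => ⟨fun j => if h : j = i then z else g ⟨j, h⟩, by simp⟩
      left_inv := by
        rintro ⟨a, ha⟩
        apply Subtype.ext
        funext j
        dsimp
        split
        · next h => rw [h]; exact ha.symm
        · rfl
      right_inv := by
        intro g
        funext j
        dsimp
        rw [dif_neg j.2]
    }
  rw [Fintype.card_congr e, Fintype.card_fun, Fintype.card_fin]
  congr 1
  have : Fintype.card {j : Fin n // j ≠ i} = n - 1 := by
    simp [Fintype.card_subtype_compl, Fintype.card_subtype_eq]
  rw [this]

end HammingECC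

open HammingECC in
/-- The edge clique cover number of H(n,q) equals n·q^{n-1}. -/
theorem hamming_eccNum (n q : ℕ) (hn : 1 ≤ n) (hq : 2 ≤ q) :
    eccNum (hamming n q) = n * q ^ (n - 1) := by
  classical
  set z0 : Fin q := ⟨0, by omega⟩ with hz0def
  set z1 : Fin q := ⟨1, by omega⟩ with hz1def
  have hz01 : z0 ≠ z1 := by simp [hz0def, hz1def, Fin.ext_iff]
  set P : Finset (Fin n × (Fin n → Fin q)) :=
    Finset.univ.filter (fun p => p.2 p.1 = z0) with hPdef
  have hmemP : ∀ p : Fin n × (Fin n → Fin q), p ∈ P ↔ p.2 p.1 = z0 := by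
    intro p; simp [hPdef]
  -- |P| = n * q^(n-1)
  have hP : P.card = n * q ^ (n - 1) := by
    have h1 : P.card = Fintype.card {p : Fin n × (Fin n → Fin q) // p.2 p.1 = z0} :=
      (Fintype.card_subtype _).symm
    rw [h1,
      Fintype.card_congr (Equiv.subtypeProdEquivSigmaSubtype
        (fun (i : Fin n) (a : Fin n → Fin q) => a i = z0)),
      Fintype.card_sigma]
    simp [card_fix]
  -- the covering family
  set F : Finset (Set (Fin n → Fin q)) := P.image (fun p => line p.1 p.2) with hFdef
  have hlineinj : Set.InjOn (fun p : Fin n × (Fin n → Fin q) => line p.1 p.2) P := by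
    rintro ⟨i, a⟩ hp ⟨i', a'⟩ hp' h
    rw [Finset.mem_coe, hmemP] at hp hp'
    simp only at hp hp' h
    have ha_mem : a ∈ line i a := fun j _ => rfl
    have hu_mem : Function.update a i z1 ∈ line i a := fun j hj =>
      Function.update_of_ne hj _ _
    rw [h] at ha_mem hu_mem
    have hii : i = i' := by
      by_contra hii
      have e1 : a i = a' i := ha_mem i hii
      have e2 : z1 = a' i := by
        have := hu_mem i hii
        rwa [Function.update_self] at this
      exact hz01 (hp ▸ (e1.trans e2.symm))
    subst hii
    have : a = a' := funext fun j => by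
      by_cases hj : j = i
      · subst hj; rw [hp, hp']
      · exact ha_mem j hj
    rw [this]
  have hcardF : F.card = n * q ^ (n - 1) := by
    rw [hFdef, Finset.card_image_of_injOn hlineinj, hP]
  have hclF : ∀ S ∈ F, (hamming n q).IsClique S := by
    intro S hS
    rw [hFdef, Finset.mem_image] at hS
    obtain ⟨p, _, rfl⟩ := hS
    exact line_isClique p.1 p.2
  have hcovF : ∀ x y, (hamming n q).Adj x y → ∃ S ∈ F, x ∈ S ∧ y ∈ S := by
    intro x y hxy
    obtain ⟨i, hi, hagr⟩ := dist_one_iff.mp hxy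
    refine ⟨line i (Function.update x i z0), ?_, ?_, ?_⟩
    · rw [hFdef, Finset.mem_image]
      exact ⟨(i, Function.update x i z0), (hmemP _).mpr (Function.update_self _ _ _), rfl⟩
    · exact fun j hj => (Function.update_of_ne hj _ _).symm
    · exact fun j hj => (hagr j hj).symm.trans (Function.update_of_ne hj _ _).symm
  have hmem : n * q ^ (n - 1) ∈ {m | ∃ F : Finset (Set (Fin n → Fin q)), F.card = m ∧
      (∀ S ∈ F, (hamming n q).IsClique S) ∧
      ∀ x y, (hamming n q).Adj x y → ∃ S ∈ F, x ∈ S ∧ y ∈ S} :=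
    ⟨F, hcardF, hclF, hcovF⟩
  refine le_antisymm (Nat.sInf_le hmem) (le_csInf ⟨_, hmem⟩ ?_)
  rintro m ⟨G, hcardG, hclG, hcovG⟩
  -- lower bound: inject P into G
  have key : ∀ p : Fin n × (Fin n → Fin q), ∃ S : Set (Fin n → Fin q),
      p ∈ P → S ∈ G ∧ p.2 ∈ S ∧ Function.update p.2 p.1 z1 ∈ S := by
    intro p
    by_cases hp : p ∈ P
    · have hadj : (hamming n q).Adj p.2 (Function.update p.2 p.1 z1) := by
        show hammingDist _ _ = 1
        refine dist_one_iff.mpr ⟨p.1, ?_, fun j hj => (Function.update_of_ne hj _ _).symm⟩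
        rw [Function.update_self, (hmemP p).mp hp]
        exact hz01
      obtain ⟨S, hSG, h1, h2⟩ := hcovG _ _ hadj
      exact ⟨S, fun _ => ⟨hSG, h1, h2⟩⟩
    · exact ⟨∅, fun h => absurd h hp⟩
  choose f hf using key
  have hmaps : ∀ p ∈ P, f p ∈ G := fun p hp => (hf p hp).1
  have hinj : Set.InjOn f P := by
    intro p hp p' hp' hfe
    rw [Finset.mem_coe] at hp hp'
    obtain ⟨hSG, hm0, hm1⟩ := hf p hp
    obtain ⟨_, hm0', hm1'⟩ := hf p' hp'
    rw [hfe] at hm0 hm1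
    have hclS := hclG _ (hmaps p' hp')
    have hne : p.2 p.1 ≠ Function.update p.2 p.1 z1 p.1 := by
      rw [Function.update_self, (hmemP p).mp hp]
      exact hz01
    have hall := clique_subset_line hclS hm0 hm1 hne
      (fun j hj => (Function.update_of_ne hj _ _).symm)
    have hii : p'.1 = p.1 := by
      by_contra hii
      have e1 : p'.2 p'.1 = p.2 p'.1 := hall _ hm0' p'.1 hii
      have e2 : Function.update p'.2 p'.1 z1 p'.1 = p.2 p'.1 := hall _ hm1' p'.1 hii
      rw [Function.update_self] at e2
      exact hz01 (((hmemP p').mp hp' ▸ e1).symm ▸ e2.symm ▸ rfl)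
    have haa : p'.2 = p.2 := funext fun j => by
      by_cases hj : j = p.1
      · subst hj
        rw [(hmemP p).mp hp, ← hii, (hmemP p').mp hp']
      · exact hall _ hm0' j hj
    obtain ⟨i, a⟩ := p; obtain ⟨i', a'⟩ := p'
    simp only at hii haa
    rw [hii, haa]
  rw [← hcardG, ← hP]
  exact Finset.card_le_card_of_injOn f hmaps hinj
end

section
/- For n ≥ 2 and q ≥ 2 and any vertex x of H(n,q), the vertex clique cover number of the open neighborhood N(x) (as an induced subgraph) equals n. -/
/-- The vertex clique cover number: minimum size of a family of cliques covering all vertices. -/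
noncomputable def vccNum {V : Type*} (G : SimpleGraph V) : ℕ :=
  sInf {m | ∃ F : Finset (Set V), F.card = m ∧ (∀ S ∈ F, G.IsClique S) ∧ ∀ v, ∃ S ∈ F, v ∈ S}

lemma hd_one_iff {n q : ℕ} (x y : Fin n → Fin q) :
    hammingDist y x = 1 ↔ ∃ i, y i ≠ x i ∧ ∀ j, j ≠ i → y j = x j := by
  show (Finset.univ.filter fun i => y i ≠ x i).card = 1 ↔ _
  rw [Finset.card_eq_one]
  constructor
  · rintro ⟨i, hi⟩
    refine ⟨i, ?_, ?_⟩
    · have : i ∈ Finset.univ.filter fun j => y j ≠ x j := hi ▸ Finset.mem_singleton_self i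
      simpa using this
    · intro j hj
      by_contra h
      have : j ∈ Finset.univ.filter fun j => y j ≠ x j := by simpa using h
      rw [hi, Finset.mem_singleton] at this
      exact hj this
  · rintro ⟨i, hi, hj⟩
    refine ⟨i, ?_⟩
    ext j
    simp only [Finset.mem_filter, Finset.mem_univ, true_and, Finset.mem_singleton]
    constructor
    · intro h; by_contra hne; exact h (hj j hne)
    · rintro rfl; exact hi

/-- For n, q ≥ 2, the vertex clique cover number of the subgraph of H(n,q)
induced by an open neighborhood equals n. -/
theorem hamming_neighborhood_vcc (n q : ℕ) (hn : 2 ≤ n) (hq : 2 ≤ q)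
    (x : Fin n → Fin q) :
    vccNum (SimpleGraph.induce ((hamming n q).neighborSet x) (hamming n q)) = n := by
  classical
  haveI : Nontrivial (Fin q) := Fin.nontrivial_iff_two_le.mpr hq
  set N := (hamming n q).neighborSet x with hN
  -- membership characterization
  have hmem : ∀ y : N, ∃ i, (y : Fin n → Fin q) i ≠ x i ∧
      ∀ j, j ≠ i → (y : Fin n → Fin q) j = x j := by
    intro y
    have : hammingDist (y : Fin n → Fin q) x = 1 := (hammingDist_comm _ _).trans y.2
    exact (hd_one_iff x _).mp this
  -- uniqueness: if y differs from x at i, then only at i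
  have huniq : ∀ (y : N) (i : Fin n), (y : Fin n → Fin q) i ≠ x i →
      ∀ j, j ≠ i → (y : Fin n → Fin q) j = x j := by
    intro y i hi j hj
    obtain ⟨k, hk1, hk2⟩ := hmem y
    have hik : i = k := by
      by_contra h
      exact hi (hk2 i h)
    subst hik
    exact hk2 j hj
  -- special vertices y i differing only at coordinate i
  have hmk : ∀ i : Fin n, ∃ y : N, (y : Fin n → Fin q) i ≠ x i := by
    intro i
    obtain ⟨v, hv⟩ := exists_ne (x i)
    have hy : Function.update x i v ∈ N := by
      show hammingDist x (Function.update x i v) = 1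
      rw [hammingDist_comm, hd_one_iff]
      exact ⟨i, by simpa using hv, fun j hj => Function.update_of_ne hj _ _⟩
    exact ⟨⟨_, hy⟩, by simpa using hv⟩
  choose yy hyy using hmk
  -- the n canonical cliques
  set S : Fin n → Set N := fun i => {y : N | (y : Fin n → Fin q) i ≠ x i} with hS
  have hSclique : ∀ i, (SimpleGraph.induce N (hamming n q)).IsClique (S i) := by
    intro i
    intro a ha b hb hab
    have hab' : (a : Fin n → Fin q) ≠ (b : Fin n → Fin q) := fun h => hab (Subtype.ext h)
    show hammingDist (a : Fin n → Fin q) (b : Fin n → Fin q) = 1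
    have haj := huniq a i ha
    have hbj := huniq b i hb
    have key : ∀ j, j ≠ i → (a : Fin n → Fin q) j = (b : Fin n → Fin q) j := by
      intro j hj; rw [haj j hj, hbj j hj]
    have hi : (a : Fin n → Fin q) i ≠ (b : Fin n → Fin q) i := by
      intro h
      apply hab'
      funext j
      by_cases hji : j = i
      · subst hji; exact h
      · exact key j hji
    rw [hd_one_iff]
    exact ⟨i, by simpa using hi, fun j hj => by simpa using key j hj⟩
  -- two vertices differing from x at distinct coordinates are non-adjacent
  have hnonadj : ∀ (i j : Fin n), i ≠ j →
      ¬ (SimpleGraph.induce N (hamming n q)).Adj (yy i) (yy j) := by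
    intro i j hij hadj
    have h1 : hammingDist ((yy i : Fin n → Fin q)) ((yy j : Fin n → Fin q)) = 1 := hadj
    rw [hd_one_iff] at h1
    obtain ⟨k, hk1, hk2⟩ := h1
    have hdi : (yy i : Fin n → Fin q) i ≠ (yy j : Fin n → Fin q) i := by
      rw [huniq (yy j) j (hyy j) i hij]
      exact hyy i
    have hdj : (yy i : Fin n → Fin q) j ≠ (yy j : Fin n → Fin q) j := by
      rw [huniq (yy i) i (hyy i) j (Ne.symm hij)]
      exact fun h => hyy j h.symm
    have hki : i = k := by by_contra h; exact hdi (hk2 i h)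
    have hkj : j = k := by by_contra h; exact hdj (hk2 j h)
    exact hij (hki.trans hkj.symm)
  apply le_antisymm
  · -- vccNum ≤ n : use the cover by S i
    apply Nat.sInf_le
    refine ⟨Finset.univ.image S, ?_, ?_, ?_⟩
    · rw [Finset.card_image_of_injective _ ?_, Finset.card_univ, Fintype.card_fin]
      intro i j hij
      by_contra h
      have h1 : yy i ∈ S i := hyy i
      rw [hij] at h1
      have := huniq (yy i) i (hyy i) j fun hji => h hji.symm
      exact h1 this
    · intro T hT
      obtain ⟨i, _, rfl⟩ := Finset.mem_image.mp hT
      exact hSclique i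
    · intro v
      obtain ⟨i, hi, _⟩ := hmem v
      exact ⟨S i, Finset.mem_image_of_mem _ (Finset.mem_univ i), hi⟩
  · -- n ≤ vccNum
    refine le_csInf ⟨n, ?_⟩ ?_
    · refine ⟨Finset.univ.image S, ?_, ?_, ?_⟩
      · rw [Finset.card_image_of_injective _ ?_, Finset.card_univ, Fintype.card_fin]
        intro i j hij
        by_contra h
        have h1 : yy i ∈ S i := hyy i
        rw [hij] at h1
        have := huniq (yy i) i (hyy i) j fun hji => h hji.symm
        exact h1 this
      · intro T hT
        obtain ⟨i, _, rfl⟩ := Finset.mem_image.mp hT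
        exact hSclique i
      · intro v
        obtain ⟨i, hi, _⟩ := hmem v
        exact ⟨S i, Finset.mem_image_of_mem _ (Finset.mem_univ i), hi⟩
    · rintro m ⟨F, hcard, hclique, hcover⟩
      choose T hTF hTmem using fun i => hcover (yy i)
      have hinj : Function.Injective T := by
        intro i j hij
        by_contra h
        have hy : yy i ≠ yy j := by
          intro he
          have : (yy i : Fin n → Fin q) i ≠ x i := hyy i
          rw [he] at this
          exact this (huniq (yy j) j (hyy j) i h)
        have hadj := hclique (T i) (hTF i) (hTmem i) (hij ▸ hTmem j) hy
        exact hnonadj i j h hadj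
      have hle := Finset.card_le_card_of_injOn (s := Finset.univ) T (fun i _ => hTF i)
        (fun i _ j _ h => hinj h)
      simpa [hcard, Finset.card_univ] using hle
end

section
/- For any graph G, the competition number k(G) is at least min over vertices v of the vertex clique cover number of the induced subgraph on the open neighborhood of v. -/
/-- The competition number of a graph `G`: the least `k` such that `G` together with
`k` isolated vertices is the competition graph of some acyclic digraph. -/
noncomputable def CompetitionNumber {V : Type*} (G : SimpleGraph V) : ℕ :=
  sInf {k | ∃ D : (V ⊕ Fin k) → (V ⊕ Fin k) → Prop,
    (∀ w, ¬ Relation.TransGen D w w) ∧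
    (∀ a b, (a ≠ b ∧ ∃ w, D a w ∧ D b w) ↔
      ∃ u v, a = Sum.inl u ∧ b = Sum.inl v ∧ G.Adj u v)}

/-- A relation on a sum type whose arcs all go from `inl` to `inr` has no cycles. -/
lemma acyclic_of_inl_to_inr {α β : Type*} (D : (α ⊕ β) → (α ⊕ β) → Prop)
    (h : ∀ a b, D a b → (∃ u, a = Sum.inl u) ∧ (∃ j, b = Sum.inr j)) :
    ∀ w, ¬ Relation.TransGen D w w := by
  have key : ∀ a b, Relation.TransGen D a b →
      (∃ u, a = Sum.inl u) ∧ (∃ j, b = Sum.inr j) := by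
    intro a b hab
    induction hab with
    | single h1 => exact h _ _ h1
    | tail _ h2 ih => exact ⟨ih.1, (h _ _ h2).2⟩
  intro w hw
  obtain ⟨⟨u, hu⟩, ⟨j, hj⟩⟩ := key w w hw
  rw [hu] at hj
  cases hj

/-- The defining set of the competition number is nonempty for a finite graph. -/
lemma comp_set_nonempty {V : Type*} [Fintype V] (G : SimpleGraph V) :
    {k | ∃ D : (V ⊕ Fin k) → (V ⊕ Fin k) → Prop,
      (∀ w, ¬ Relation.TransGen D w w) ∧
      (∀ a b, (a ≠ b ∧ ∃ w, D a w ∧ D b w) ↔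
        ∃ u v, a = Sum.inl u ∧ b = Sum.inl v ∧ G.Adj u v)}.Nonempty := by
  classical
  set k := Fintype.card (Sym2 V) with hk
  refine ⟨k, ?_⟩
  let e : Sym2 V ≃ Fin k := Fintype.equivFin _
  refine ⟨fun a b => ∃ u s, a = Sum.inl u ∧ b = Sum.inr (e s) ∧ u ∈ s ∧ s ∈ G.edgeSet,
    ?_, ?_⟩
  · apply acyclic_of_inl_to_inr
    rintro a b ⟨u, s, rfl, rfl, -, -⟩
    exact ⟨⟨u, rfl⟩, ⟨e s, rfl⟩⟩
  · intro a b
    constructor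
    · rintro ⟨hne, w, ⟨u, s, rfl, rfl, hus, hse⟩, ⟨u', s', hb, hw, hus', -⟩⟩
      have hss : s = s' := e.injective (Sum.inr.inj hw)
      subst hss
      subst hb
      have hune : u ≠ u' := fun h => hne (by rw [h])
      have : s = s(u, u') := ((Sym2.mem_and_mem_iff hune).1 ⟨hus, hus'⟩)
      refine ⟨u, u', rfl, rfl, ?_⟩
      rw [this] at hse
      exact hse
    · rintro ⟨u, v, rfl, rfl, hadj⟩
      refine ⟨fun h => hadj.ne (Sum.inl.inj h), Sum.inr (e s(u, v)),
        ⟨u, s(u, v), rfl, rfl, Sym2.mem_mk_left u v, hadj⟩,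
        ⟨v, s(u, v), rfl, rfl, Sym2.mem_mk_right u v, hadj⟩⟩

/-- Main step: any digraph realizing `G` with `k` extra vertices gives a vertex whose
neighborhood has clique cover number at most `k`. -/
lemma exists_vccNum_le {V : Type*} [Fintype V] [Nonempty V] (G : SimpleGraph V) (k : ℕ)
    (D : (V ⊕ Fin k) → (V ⊕ Fin k) → Prop)
    (hacyc : ∀ w, ¬ Relation.TransGen D w w)
    (hiff : ∀ a b, (a ≠ b ∧ ∃ w, D a w ∧ D b w) ↔
      ∃ u v, a = Sum.inl u ∧ b = Sum.inl v ∧ G.Adj u v) :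
    ∃ v : V, vccNum (SimpleGraph.induce (G.neighborSet v) G) ≤ k := by
  classical
  -- height function: number of vertices reachable from `w`
  set h : (V ⊕ Fin k) → ℕ := fun w => Set.ncard {x | Relation.TransGen D w x} with hh
  have hlt : ∀ w x, Relation.TransGen D w x → h x < h w := by
    intro w x hwx
    apply Set.ncard_lt_ncard _ (Set.toFinite _)
    rw [Set.ssubset_def]
    constructor
    · intro y hy
      exact hwx.trans hy
    · intro hsup
      exact hacyc x (hsup hwx)
  -- choose v minimizing h (inl v)
  obtain ⟨v, -, hmin⟩ := Finset.exists_min_image Finset.univ (fun v : V => h (Sum.inl v))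
    ⟨Classical.arbitrary V, Finset.mem_univ _⟩
  have key : ∀ p, D (Sum.inl v) p → ∃ i, p = Sum.inr i := by
    intro p hp
    cases p with
    | inl u =>
      have h1 := hlt _ _ (Relation.TransGen.single hp)
      exact absurd (hmin u (Finset.mem_univ u)) (not_le.2 h1)
    | inr i => exact ⟨i, rfl⟩
  refine ⟨v, ?_⟩
  set S : Fin k → Set (G.neighborSet v) :=
    fun i => {w | D (Sum.inl (w : V)) (Sum.inr i)} with hS
  set F : Finset (Set (G.neighborSet v)) := Finset.univ.image S with hF
  have hclq : ∀ T ∈ F, (SimpleGraph.induce (G.neighborSet v) G).IsClique T := by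
    intro T hT
    obtain ⟨i, -, rfl⟩ := Finset.mem_image.1 hT
    intro a ha b hb hne
    have hco : (a : V) ≠ (b : V) := fun hc => hne (Subtype.ext hc)
    obtain ⟨u', v', h1, h2, hadj⟩ := (hiff (Sum.inl (a : V)) (Sum.inl (b : V))).1
      ⟨fun hc => hco (Sum.inl.inj hc), Sum.inr i, ha, hb⟩
    have ha' : (a : V) = u' := Sum.inl.inj h1
    have hb' : (b : V) = v' := Sum.inl.inj h2
    show G.Adj (a : V) (b : V)
    rw [ha', hb']
    exact hadj
  have hcov : ∀ w : G.neighborSet v,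
      ∃ T ∈ F, w ∈ T := by
    intro w
    have hadj : G.Adj v (w : V) := w.2
    obtain ⟨-, p, hvp, hwp⟩ := (hiff (Sum.inl v) (Sum.inl (w : V))).2
      ⟨v, (w : V), rfl, rfl, hadj⟩
    obtain ⟨i, rfl⟩ := key p hvp
    exact ⟨S i, Finset.mem_image_of_mem _ (Finset.mem_univ i), hwp⟩
  calc vccNum (SimpleGraph.induce (G.neighborSet v) G) ≤ F.card :=
        Nat.sInf_le ⟨F, rfl, hclq, hcov⟩
    _ ≤ (Finset.univ : Finset (Fin k)).card := Finset.card_image_le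
    _ = k := by simp

/-- Opsut's lower bound: k(G) ≥ min over vertices v of θ_V(N(v)). -/
theorem opsut_lower_bound {V : Type*} [Fintype V] (G : SimpleGraph V) :
    sInf (Set.range fun v : V =>
      vccNum (SimpleGraph.induce (G.neighborSet v) G)) ≤ CompetitionNumber G := by
  classical
  cases isEmpty_or_nonempty V with
  | inl hempty =>
    rw [Set.range_eq_empty, Nat.sInf_empty]
    exact Nat.zero_le _
  | inr hne =>
    have hS := comp_set_nonempty G
    obtain ⟨D, hacyc, hiff⟩ := Nat.sInf_mem hS
    obtain ⟨v, hv⟩ := exists_vccNum_le G (CompetitionNumber G) D hacyc hiff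
    exact le_trans (Nat.sInf_le (Set.mem_range_self v)) hv
end

section
/- For n ≥ 2 and q ≥ 2, the competition number of the Hamming graph H(n,q) is at least n. -/
/-- Every finite graph has some realizing acyclic digraph: one prey per edge. -/
lemma exists_realizer {V : Type*} [Fintype V] (G : SimpleGraph V) :
    ∃ D : (V ⊕ Fin (Fintype.card (V × V))) → (V ⊕ Fin (Fintype.card (V × V))) → Prop,
      (∀ w, ¬ Relation.TransGen D w w) ∧
      (∀ a b, (a ≠ b ∧ ∃ w, D a w ∧ D b w) ↔
        ∃ u v, a = Sum.inl u ∧ b = Sum.inl v ∧ G.Adj u v) := by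
  classical
  set m := Fintype.card (V × V) with hm
  let β : V × V ≃ Fin m := Fintype.equivFin _
  refine ⟨fun a w => ∃ u v, G.Adj u v ∧ w = Sum.inr (β (u, v)) ∧
      (a = Sum.inl u ∨ a = Sum.inl v), ?_, ?_⟩
  · have hshape : ∀ a w : V ⊕ Fin m, (∃ u v, G.Adj u v ∧ w = Sum.inr (β (u, v)) ∧
        (a = Sum.inl u ∨ a = Sum.inl v)) → (∃ u, a = Sum.inl u) ∧ ∃ p, w = Sum.inr p := by
      rintro a w ⟨u, v, -, rfl, h | h⟩ <;> exact ⟨⟨_, h⟩, _, rfl⟩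
    intro w hw
    obtain ⟨c, hwc, -⟩ := Relation.TransGen.head'_iff.mp hw
    obtain ⟨c', -, hcw⟩ := Relation.TransGen.tail'_iff.mp hw
    obtain ⟨⟨u, hu⟩, -⟩ := hshape _ _ hwc
    obtain ⟨-, p, hp⟩ := hshape _ _ hcw
    rw [hu] at hp
    exact Sum.inl_ne_inr hp
  · intro a b
    constructor
    · rintro ⟨hab, w, ⟨u, v, huv, rfl, ha⟩, ⟨u', v', huv', hw', hb⟩⟩
      have hpq : (u, v) = (u', v') := β.injective (Sum.inr_injective hw')
      injection hpq with h1 h2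
      subst h1; subst h2
      rcases ha with rfl | rfl <;> rcases hb with rfl | rfl
      · exact absurd rfl hab
      · exact ⟨u, v, rfl, rfl, huv⟩
      · exact ⟨v, u, rfl, rfl, huv.symm⟩
      · exact absurd rfl hab
    · rintro ⟨u, v, rfl, rfl, huv⟩
      refine ⟨by simpa using huv.ne, Sum.inr (β (u, v)), ⟨u, v, huv, rfl, Or.inl rfl⟩,
        ⟨u, v, huv, rfl, Or.inr rfl⟩⟩

/-- Any realizing acyclic digraph for H(n,q) needs at least n extra vertices. -/
lemma realizer_lower {n q k : ℕ} (hq : 2 ≤ q)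
    (D : ((Fin n → Fin q) ⊕ Fin k) → ((Fin n → Fin q) ⊕ Fin k) → Prop)
    (hA : ∀ w, ¬ Relation.TransGen D w w)
    (hC : ∀ a b, (a ≠ b ∧ ∃ w, D a w ∧ D b w) ↔
      ∃ u v, a = Sum.inl u ∧ b = Sum.inl v ∧ (hamming n q).Adj u v) :
    n ≤ k := by
  classical
  haveI : Nontrivial (Fin q) := Fin.nontrivial_iff_two_le.mpr hq
  -- a vertex of V minimal in the acyclic order
  let R : ((Fin n → Fin q) ⊕ Fin k) → ((Fin n → Fin q) ⊕ Fin k) → Prop :=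
    fun a b => Relation.TransGen D b a
  haveI : IsTrans ((Fin n → Fin q) ⊕ Fin k) R := ⟨fun a b c h1 h2 => h2.trans h1⟩
  haveI : IsIrrefl ((Fin n → Fin q) ⊕ Fin k) R := ⟨hA⟩
  have wf : WellFounded R := Finite.wellFounded_of_trans_of_irrefl R
  have hV0 : Fin n → Fin q := fun _ => ⟨0, by omega⟩
  obtain ⟨a, ⟨v₀, rfl⟩, hmin⟩ := wf.has_min (Set.range Sum.inl) ⟨Sum.inl hV0, hV0, rfl⟩
  have hprey : ∀ w, D (Sum.inl v₀) w → ∃ p : Fin k, w = Sum.inr p := by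
    intro w hw
    cases w with
    | inl u => exact absurd (Relation.TransGen.single hw) (hmin _ ⟨u, rfl⟩)
    | inr p => exact ⟨p, rfl⟩
  -- the n neighbors of v₀, one per coordinate
  have hc : ∀ i : Fin n, ∃ c : Fin q, c ≠ v₀ i := fun i => exists_ne (v₀ i)
  choose c hcne using hc
  have hcne' : ∀ i, v₀ i ≠ c i := fun i => (hcne i).symm
  set x : Fin n → (Fin n → Fin q) := fun i => Function.update v₀ i (c i) with hx
  have hfilter1 : ∀ i : Fin n, (Finset.univ.filter fun j => x i j ≠ v₀ j) = {i} := by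
    intro i
    ext j
    by_cases h : j = i <;> simp [hx, Function.update_apply, h, hcne i]
  have hadj : ∀ i : Fin n, (hamming n q).Adj (x i) v₀ := by
    intro i
    show hammingDist (x i) v₀ = 1
    unfold hammingDist
    rw [hfilter1 i, Finset.card_singleton]
  have hfilter2 : ∀ i j : Fin n, i ≠ j →
      (Finset.univ.filter fun l => x i l ≠ x j l) = {i, j} := by
    intro i j hij
    ext l
    by_cases h1 : l = i
    · subst h1
      simp [hx, Function.update_apply, hij, Ne.symm hij, hcne, hcne']
    · by_cases h2 : l = j
      · subst h2
        simp [hx, Function.update_apply, hij, Ne.symm hij, hcne, hcne', h1]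
      · simp [hx, Function.update_apply, h1, h2]
  have hdist2 : ∀ i j : Fin n, i ≠ j → hammingDist (x i) (x j) = 2 := by
    intro i j hij
    unfold hammingDist
    rw [hfilter2 i j hij, Finset.card_insert_of_notMem (by simpa using hij),
      Finset.card_singleton]
  have hstep : ∀ i : Fin n, ∃ p : Fin k, D (Sum.inl (x i)) (Sum.inr p) := by
    intro i
    obtain ⟨-, w, hxw, hvw⟩ := (hC (Sum.inl (x i)) (Sum.inl v₀)).mpr
      ⟨x i, v₀, rfl, rfl, hadj i⟩
    obtain ⟨p, rfl⟩ := hprey w hvw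
    exact ⟨p, hxw⟩
  choose f hf using hstep
  have hinj : Function.Injective f := by
    intro i j hij
    by_contra hne
    have hxy : x i ≠ x j := by
      intro h
      have := congrFun h i
      simp [hx, Function.update_apply, hne] at this
      exact hcne i this
    obtain ⟨u, v, hu, hv, huv⟩ := (hC (Sum.inl (x i)) (Sum.inl (x j))).mp
      ⟨by simpa using hxy, Sum.inr (f i), hf i, hij ▸ hf j⟩
    have hu' : u = x i := Sum.inl_injective hu.symm
    have hv' : v = x j := Sum.inl_injective hv.symm
    have h1 : hammingDist (x i) (x j) = 1 := hu' ▸ hv' ▸ huv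
    rw [hdist2 i j hne] at h1
    exact absurd h1 (by norm_num)
  simpa using Fintype.card_le_of_injective f hinj

/-- For n, q ≥ 2, k(H(n,q)) ≥ n. -/
theorem hamming_compnum_lower (n q : ℕ) (hn : 2 ≤ n) (hq : 2 ≤ q) :
    n ≤ CompetitionNumber (hamming n q) := by
  refine le_csInf ⟨Fintype.card ((Fin n → Fin q) × (Fin n → Fin q)),
    exists_realizer (hamming n q)⟩ ?_
  rintro k ⟨D, hA, hC⟩
  exact realizer_lower hq D hA hC
end

section
/- For q ≥ 2, the competition number of the Hamming graph H(2,q) = K_q □ K_q (the rook's graph) equals 2. -/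
/-- Characterization of Hamming distance 1 on pairs. -/
lemma hd2 {q : ℕ} (x y : Fin 2 → Fin q) :
    hammingDist x y = 1 ↔ ((x 0 = y 0 ∧ x 1 ≠ y 1) ∨ (¬ x 0 = y 0 ∧ x 1 = y 1)) := by
  rw [hammingDist, Finset.card_filter, Fin.sum_univ_two]
  by_cases h0 : x 0 = y 0 <;> by_cases h1 : x 1 = y 1 <;> simp [h0, h1]

lemma eq2 {q : ℕ} {x y : Fin 2 → Fin q} (h0 : x 0 = y 0) (h1 : x 1 = y 1) : x = y := by
  funext i; fin_cases i <;> assumption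

/-- The witnessing acyclic digraph for the upper bound `k(H(2,q)) ≤ 2`:
column cliques prey on `(0, j-1)` (column `0` preys on the extra vertex `0`),
row cliques prey on `(i-1, q-1)` (row `0` preys on the extra vertex `1`). -/
def D2 (q : ℕ) : ((Fin 2 → Fin q) ⊕ Fin 2) → ((Fin 2 → Fin q) ⊕ Fin 2) → Prop
  | Sum.inl x, Sum.inl y =>
      ((x 1 : ℕ) ≠ 0 ∧ (y 0 : ℕ) = 0 ∧ (y 1 : ℕ) + 1 = (x 1 : ℕ)) ∨
      ((x 0 : ℕ) ≠ 0 ∧ (y 0 : ℕ) + 1 = (x 0 : ℕ) ∧ (y 1 : ℕ) = q - 1)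
  | Sum.inl x, Sum.inr z => ((x 1 : ℕ) = 0 ∧ z = 0) ∨ ((x 0 : ℕ) = 0 ∧ z = 1)
  | Sum.inr _, _ => False

/-- A measure that strictly decreases along arcs of `D2`. -/
def m2 (q : ℕ) : ((Fin 2 → Fin q) ⊕ Fin 2) → ℕ
  | Sum.inl x => (x 0 : ℕ) * q + (x 1 : ℕ) + 2
  | Sum.inr z => z

lemma D2_lt {q : ℕ} (a b : (Fin 2 → Fin q) ⊕ Fin 2) (h : D2 q a b) : m2 q b < m2 q a := by
  match a, b with
  | Sum.inl x, Sum.inl y =>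
    have hx0 := (x 0).isLt; have hx1 := (x 1).isLt
    have hy0 := (y 0).isLt; have hy1 := (y 1).isLt
    simp only [D2, m2] at *
    rcases h with ⟨h1, h2, h3⟩ | ⟨h1, h2, h3⟩
    · have e : (y 0 : ℕ) * q = 0 := by rw [h2]; ring
      omega
    · have e : (x 0 : ℕ) * q = (y 0 : ℕ) * q + q := by rw [← h2]; ring
      omega
  | Sum.inl x, Sum.inr z =>
    have hz := z.isLt
    simp only [m2]
    omega
  | Sum.inr z, _ => exact absurd h (by simp [D2])

lemma D2_acyclic {q : ℕ} : ∀ w, ¬ Relation.TransGen (D2 q) w w := by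
  have key : ∀ a b, Relation.TransGen (D2 q) a b → m2 q b < m2 q a := by
    intro a b h
    induction h with
    | single h => exact D2_lt _ _ h
    | tail _ h ih => exact lt_trans (D2_lt _ _ h) ih
  exact fun w hw => absurd (key w w hw) (lt_irrefl _)

lemma D2_comp {q : ℕ} (hq : 2 ≤ q) :
    ∀ a b, (a ≠ b ∧ ∃ w, D2 q a w ∧ D2 q b w) ↔
      ∃ u v, a = Sum.inl u ∧ b = Sum.inl v ∧ (hamming 2 q).Adj u v := by
  intro a b
  constructor
  · rintro ⟨hne, w, haw, hbw⟩
    match a, b with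
    | Sum.inr z, _ => exact absurd haw (by simp [D2])
    | Sum.inl x, Sum.inr z => exact absurd hbw (by simp [D2])
    | Sum.inl x, Sum.inl y =>
      refine ⟨x, y, rfl, rfl, ?_⟩
      have hxy : x ≠ y := fun h => hne (by rw [h])
      show hammingDist x y = 1
      rw [hd2]
      match w with
      | Sum.inl p =>
        have hp1 := (p 1).isLt
        have hx1 := (x 1).isLt
        have hy1 := (y 1).isLt
        simp only [D2] at haw hbw
        rcases haw with ⟨a1, a2, a3⟩ | ⟨a1, a2, a3⟩ <;>
          rcases hbw with ⟨b1, b2, b3⟩ | ⟨b1, b2, b3⟩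
        · have h1 : x 1 = y 1 := Fin.val_injective (by omega)
          have h0 : ¬ x 0 = y 0 := fun h => hxy (eq2 h h1)
          exact Or.inr ⟨h0, h1⟩
        · omega
        · omega
        · have h0 : x 0 = y 0 := Fin.val_injective (by omega)
          have h1 : x 1 ≠ y 1 := fun h => hxy (eq2 h0 h)
          exact Or.inl ⟨h0, h1⟩
      | Sum.inr z =>
        simp only [D2] at haw hbw
        rcases haw with ⟨a1, a2⟩ | ⟨a1, a2⟩ <;>
          rcases hbw with ⟨b1, b2⟩ | ⟨b1, b2⟩
        · have h1 : x 1 = y 1 := Fin.val_injective (by omega)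
          exact Or.inr ⟨fun h => hxy (eq2 h h1), h1⟩
        · exact absurd (a2.symm.trans b2) (by decide)
        · exact absurd (a2.symm.trans b2) (by decide)
        · have h0 : x 0 = y 0 := Fin.val_injective (by omega)
          exact Or.inl ⟨h0, fun h => hxy (eq2 h0 h)⟩
  · rintro ⟨u, v, rfl, rfl, hadj⟩
    have huv : u ≠ v := hadj.ne
    refine ⟨fun h => huv (Sum.inl_injective h), ?_⟩
    have hu0 := (u 0).isLt
    have hu1 := (u 1).isLt
    rcases (hd2 u v).mp hadj with ⟨h0, h1⟩ | ⟨h0, h1⟩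
    · by_cases hz : (u 0 : ℕ) = 0
      · exact ⟨Sum.inr 1, Or.inr ⟨hz, rfl⟩, Or.inr ⟨by rw [← h0]; exact hz, rfl⟩⟩
      · refine ⟨Sum.inl ![⟨(u 0 : ℕ) - 1, by omega⟩, ⟨q - 1, by omega⟩], ?_, ?_⟩
        · exact Or.inr ⟨hz, by simp; omega, by simp⟩
        · exact Or.inr ⟨by rw [← h0]; exact hz, by simp; rw [← h0]; omega, by simp⟩
    · by_cases hz : (u 1 : ℕ) = 0
      · exact ⟨Sum.inr 0, Or.inl ⟨hz, rfl⟩, Or.inl ⟨by rw [← h1]; exact hz, rfl⟩⟩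
      · refine ⟨Sum.inl ![⟨0, by omega⟩, ⟨(u 1 : ℕ) - 1, by omega⟩], ?_, ?_⟩
        · exact Or.inl ⟨hz, by simp, by simp; omega⟩
        · exact Or.inl ⟨by rw [← h1]; exact hz, by simp, by simp; rw [← h1]; omega⟩

/-- Lower bound: no acyclic digraph with at most one extra vertex has
`H(2,q)` plus isolated vertices as its competition graph. -/
lemma no_small {q k : ℕ} (hq : 2 ≤ q) (hk : k ≤ 1)
    (D : ((Fin 2 → Fin q) ⊕ Fin k) → ((Fin 2 → Fin q) ⊕ Fin k) → Prop)
    (hac : ∀ w, ¬ Relation.TransGen D w w)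
    (hcomp : ∀ a b, (a ≠ b ∧ ∃ w, D a w ∧ D b w) ↔
      ∃ u v, a = Sum.inl u ∧ b = Sum.inl v ∧ (hamming 2 q).Adj u v) : False := by
  haveI : NeZero q := ⟨by omega⟩
  -- Step 1: there is a vertex v all of whose out-neighbors are in the Fin k part
  have step1 : ∃ v : Fin 2 → Fin q, ∀ x, D (Sum.inl v) x → ∃ z, x = Sum.inr z := by
    by_contra hcon
    push_neg at hcon
    have hsucc : ∀ v : Fin 2 → Fin q, ∃ u, D (Sum.inl v) (Sum.inl u) := by
      intro v
      obtain ⟨x, hx, hnz⟩ := hcon v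
      match x with
      | Sum.inl u => exact ⟨u, hx⟩
      | Sum.inr z => exact absurd rfl (hnz z)
    choose f hf using hsucc
    set g : ℕ → (Fin 2 → Fin q) := fun n => f^[n] (fun _ => 0) with hg
    have hstep : ∀ m, g (m + 1) = f (g m) := fun m => Function.iterate_succ_apply' f m _
    have hchain : ∀ n m, Relation.TransGen D (Sum.inl (g m)) (Sum.inl (g (m + n + 1))) := by
      intro n
      induction n with
      | zero => intro m; exact Relation.TransGen.single (by rw [hstep m]; exact hf (g m))
      | succ n ih =>
        intro m
        exact (ih m).tail (show D (Sum.inl (g (m + n + 1))) (Sum.inl (g (m + n + 1 + 1)))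
          by rw [hstep (m + n + 1)]; exact hf _)
    obtain ⟨i, j, hij, heq⟩ := Finite.exists_ne_map_eq_of_infinite g
    rcases Nat.lt_or_ge i j with h | h
    · obtain ⟨n, rfl⟩ : ∃ n, j = i + n + 1 := ⟨j - i - 1, by omega⟩
      exact hac _ (heq ▸ hchain n i)
    · have h' : j < i := by omega
      obtain ⟨n, rfl⟩ : ∃ n, i = j + n + 1 := ⟨i - j - 1, by omega⟩
      exact hac _ (heq ▸ hchain n j)
  obtain ⟨v, hv⟩ := step1
  -- Step 2: build two neighbors of v that are not adjacent to each other
  haveI : Nontrivial (Fin q) := Fin.nontrivial_iff_two_le.mpr hq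
  obtain ⟨a, ha⟩ := exists_ne (v 0)
  obtain ⟨b, hb⟩ := exists_ne (v 1)
  set u1 : Fin 2 → Fin q := Function.update v 0 a with hu1
  set u2 : Fin 2 → Fin q := Function.update v 1 b with hu2
  have e10 : u1 0 = a := by simp [hu1]
  have e11 : u1 1 = v 1 := by simp [hu1, Function.update_of_ne]
  have e20 : u2 0 = v 0 := by simp [hu2, Function.update_of_ne]
  have e21 : u2 1 = b := by simp [hu2]
  have adj1 : (hamming 2 q).Adj v u1 := by
    show hammingDist v u1 = 1
    rw [hd2]; exact Or.inr ⟨by rw [e10]; exact fun h => ha h.symm, e11.symm⟩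
  have adj2 : (hamming 2 q).Adj v u2 := by
    show hammingDist v u2 = 1
    rw [hd2]; exact Or.inl ⟨e20.symm, by rw [e21]; exact fun h => hb h.symm⟩
  have nadj : ¬ (hamming 2 q).Adj u1 u2 := by
    show ¬ hammingDist u1 u2 = 1
    rw [hd2]
    rintro (⟨h0, _⟩ | ⟨_, h1⟩)
    · exact ha (by rw [← e10, h0, e20])
    · exact hb (by rw [← e11, h1, e21])
  -- Step 3: the two neighbors share a common prey, forcing them to be adjacent
  have hprey : ∀ u : Fin 2 → Fin q, (hamming 2 q).Adj v u →
      ∃ z : Fin k, D (Sum.inl u) (Sum.inr z) := by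
    intro u hadj
    obtain ⟨-, w, hvw, huw⟩ := (hcomp (Sum.inl v) (Sum.inl u)).mpr ⟨v, u, rfl, rfl, hadj⟩
    obtain ⟨z, rfl⟩ := hv w hvw
    exact ⟨z, huw⟩
  obtain ⟨z1, hz1⟩ := hprey u1 adj1
  obtain ⟨z2, hz2⟩ := hprey u2 adj2
  have hzz : z1 = z2 := Fin.val_injective (by have h1 := z1.isLt; have h2 := z2.isLt; omega)
  have hne : (Sum.inl u1 : (Fin 2 → Fin q) ⊕ Fin k) ≠ Sum.inl u2 := by
    intro h
    have := Sum.inl_injective h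
    exact ha (by rw [← e10, this, e20])
  obtain ⟨u, w, h1, h2, hadj⟩ :=
    (hcomp (Sum.inl u1) (Sum.inl u2)).mp ⟨hne, Sum.inr z1, hz1, hzz ▸ hz2⟩
  exact nadj (by rwa [Sum.inl_injective h1, Sum.inl_injective h2])

/-- For q ≥ 2, k(H(2,q)) = 2. -/
theorem compnum_H2q (q : ℕ) (hq : 2 ≤ q) :
    CompetitionNumber (hamming 2 q) = 2 := by
  have h2mem : 2 ∈ {k | ∃ D : ((Fin 2 → Fin q) ⊕ Fin k) → ((Fin 2 → Fin q) ⊕ Fin k) → Prop,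
      (∀ w, ¬ Relation.TransGen D w w) ∧
      (∀ a b, (a ≠ b ∧ ∃ w, D a w ∧ D b w) ↔
        ∃ u v, a = Sum.inl u ∧ b = Sum.inl v ∧ (hamming 2 q).Adj u v)} :=
    ⟨D2 q, D2_acyclic, D2_comp hq⟩
  refine le_antisymm (Nat.sInf_le h2mem) (le_csInf ⟨2, h2mem⟩ ?_)
  rintro k ⟨D, hac, hcomp⟩
  by_contra hlt
  exact no_small hq (by omega) D hac hcomp
end

section
/- For q ≥ 2, there exists an acyclic digraph D on vertex set [q]^2 ∪ {z_1, z_2} whose competition graph is H(2,q) together with the two isolated vertices z_1, z_2; hence k(H(2,q)) ≤ 2. -/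
section Aux

variable (q : ℕ) (hq : 2 ≤ q)

/-- Prey of the row through `x`. -/
def rowPrey (x : Fin 2 → Fin q) : (Fin 2 → Fin q) ⊕ Fin 2 :=
  if h : (x 0).val + 1 < q then
    Sum.inl (fun k => if k = 0 then ⟨(x 0).val + 1, h⟩ else ⟨0, by omega⟩)
  else Sum.inr ⟨0, by omega⟩

/-- Prey of the column through `x`. -/
def colPrey (x : Fin 2 → Fin q) : (Fin 2 → Fin q) ⊕ Fin 2 :=
  if h : (x 1).val + 1 < q then
    Sum.inl (fun k => if k = 0 then ⟨q - 1, by omega⟩ else ⟨(x 1).val + 1, h⟩)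
  else Sum.inr ⟨1, by omega⟩

/-- The digraph. -/
def myD : ((Fin 2 → Fin q) ⊕ Fin 2) → ((Fin 2 → Fin q) ⊕ Fin 2) → Prop
  | Sum.inl x, b => b = rowPrey q hq x ∨ b = colPrey q hq x
  | Sum.inr _, _ => False

/-- A rank function. -/
def rnk : ((Fin 2 → Fin q) ⊕ Fin 2) → ℕ
  | Sum.inl x => (x 0).val * q + (x 1).val
  | Sum.inr i => q * q + i.val

lemma rnk_lt {a b} (h : myD q hq a b) : rnk q a < rnk q b := by
  cases a with
  | inr i => exact absurd h (by simp [myD])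
  | inl x =>
    have h0 : (x 0).val < q := (x 0).isLt
    have h1 : (x 1).val < q := (x 1).isLt
    rcases h with h | h
    · rw [h, rowPrey]
      split
      · simp only [rnk]
        simp only [show ((0:Fin 2) = 0) = True by simp, show ((1:Fin 2) = 0) = False by simp,
          if_true, if_false]
        nlinarith
      · simp only [rnk]; nlinarith
    · rw [h, colPrey]
      split
      · simp only [rnk]
        simp only [show ((0:Fin 2) = 0) = True by simp, show ((1:Fin 2) = 0) = False by simp,
          if_true, if_false]
        have hle : (x 0).val ≤ q - 1 := by omega
        have := Nat.mul_le_mul_right q hle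
        omega
      · simp only [rnk]; nlinarith

lemma myD_acyclic : ∀ w, ¬ Relation.TransGen (myD q hq) w w := by
  have key : ∀ a b, Relation.TransGen (myD q hq) a b → rnk q a < rnk q b := by
    intro a b h
    induction h with
    | single h => exact rnk_lt q hq h
    | tail _ h ih => exact ih.trans (rnk_lt q hq h)
  intro w hw
  exact lt_irrefl _ (key w w hw)

lemma rowPrey_congr {x y : Fin 2 → Fin q} (h : x 0 = y 0) :
    rowPrey q hq x = rowPrey q hq y := by simp only [rowPrey, h]

lemma colPrey_congr {x y : Fin 2 → Fin q} (h : x 1 = y 1) :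
    colPrey q hq x = colPrey q hq y := by simp only [colPrey, h]

lemma rowPrey_inj {x y : Fin 2 → Fin q} (h : rowPrey q hq x = rowPrey q hq y) :
    x 0 = y 0 := by
  unfold rowPrey at h
  split at h <;> split at h
  · have := congrFun (Sum.inl.inj h) 0
    simp [Fin.ext_iff] at this
    exact Fin.ext (by omega)
  · exact absurd h (by simp)
  · exact absurd h (by simp)
  · rename_i h1 h2
    have e1 : (x 0).val = q - 1 := by omega
    have e2 : (y 0).val = q - 1 := by omega
    exact Fin.ext (e1.trans e2.symm)

lemma colPrey_inj {x y : Fin 2 → Fin q} (h : colPrey q hq x = colPrey q hq y) :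
    x 1 = y 1 := by
  unfold colPrey at h
  split at h <;> split at h
  · have := congrFun (Sum.inl.inj h) 1
    simp [Fin.ext_iff] at this
    exact Fin.ext (by omega)
  · exact absurd h (by simp)
  · exact absurd h (by simp)
  · rename_i h1 h2
    have e1 : (x 1).val = q - 1 := by omega
    have e2 : (y 1).val = q - 1 := by omega
    exact Fin.ext (e1.trans e2.symm)

lemma rowPrey_ne_colPrey (x y : Fin 2 → Fin q) :
    rowPrey q hq x ≠ colPrey q hq y := by
  unfold rowPrey colPrey
  split <;> split
  · intro h
    have := congrFun (Sum.inl.inj h) 1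
    simp only [if_neg (by decide : (1 : Fin 2) ≠ 0)] at this
    have := congrArg Fin.val this
    simp at this
  · simp
  · simp
  · intro h
    have := Sum.inr.inj h
    have := congrArg Fin.val this
    simp at this

lemma hamming_two_iff (x y : Fin 2 → Fin q) :
    hammingDist x y = 1 ↔
      (x 0 = y 0 ∧ x 1 ≠ y 1) ∨ (x 0 ≠ y 0 ∧ x 1 = y 1) := by
  have huniv : (Finset.univ : Finset (Fin 2)) = {0, 1} := by decide
  rw [hammingDist, huniv]
  by_cases h0 : x 0 = y 0 <;> by_cases h1 : x 1 = y 1 <;>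
    simp [Finset.filter_insert, Finset.filter_singleton, h0, h1]

lemma funext_two {x y : Fin 2 → Fin q} (h0 : x 0 = y 0) (h1 : x 1 = y 1) : x = y := by
  funext k
  fin_cases k <;> assumption

lemma myD_comp : ∀ a b, (a ≠ b ∧ ∃ w, myD q hq a w ∧ myD q hq b w) ↔
    ∃ u v, a = Sum.inl u ∧ b = Sum.inl v ∧ (hamming 2 q).Adj u v := by
  intro a b
  constructor
  · rintro ⟨hab, w, haw, hbw⟩
    cases a with
    | inr i => exact absurd haw (by simp [myD])
    | inl u =>
      cases b with
      | inr i => exact absurd hbw (by simp [myD])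
      | inl v =>
        have huv : u ≠ v := fun h => hab (by rw [h])
        refine ⟨u, v, rfl, rfl, ?_⟩
        show hammingDist u v = 1
        rw [hamming_two_iff]
        rcases haw with h | h <;> rcases hbw with h' | h'
        · have e0 : u 0 = v 0 := rowPrey_inj q hq (h.symm.trans h')
          exact Or.inl ⟨e0, fun e1 => huv (funext_two q e0 e1)⟩
        · exact absurd (h.symm.trans h') (rowPrey_ne_colPrey q hq u v)
        · exact absurd (h'.symm.trans h) (rowPrey_ne_colPrey q hq v u)
        · have e1 : u 1 = v 1 := colPrey_inj q hq (h.symm.trans h')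
          exact Or.inr ⟨fun e0 => huv (funext_two q e0 e1), e1⟩
  · rintro ⟨u, v, rfl, rfl, hadj⟩
    have h := (hamming_two_iff q u v).mp hadj
    constructor
    · rcases h with ⟨_, h1⟩ | ⟨h0, _⟩
      · exact fun he => h1 (congrFun (Sum.inl.inj he) 1)
      · exact fun he => h0 (congrFun (Sum.inl.inj he) 0)
    · rcases h with ⟨h0, _⟩ | ⟨_, h1⟩
      · exact ⟨rowPrey q hq u, Or.inl rfl, Or.inl (rowPrey_congr q hq h0)⟩
      · exact ⟨colPrey q hq u, Or.inr rfl, Or.inr (colPrey_congr q hq h1)⟩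

end Aux

/-- For q ≥ 2 there is an acyclic digraph on [q]² together with two extra vertices
whose competition graph is H(2,q) plus two isolated vertices; hence k(H(2,q)) ≤ 2. -/
theorem compnum_H2q_upper (q : ℕ) (hq : 2 ≤ q) :
    (∃ D : ((Fin 2 → Fin q) ⊕ Fin 2) → ((Fin 2 → Fin q) ⊕ Fin 2) → Prop,
      (∀ w, ¬ Relation.TransGen D w w) ∧
      (∀ a b, (a ≠ b ∧ ∃ w, D a w ∧ D b w) ↔
        ∃ u v, a = Sum.inl u ∧ b = Sum.inl v ∧ (hamming 2 q).Adj u v)) ∧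
    CompetitionNumber (hamming 2 q) ≤ 2 := by
  have hmem : ∃ D : ((Fin 2 → Fin q) ⊕ Fin 2) → ((Fin 2 → Fin q) ⊕ Fin 2) → Prop,
      (∀ w, ¬ Relation.TransGen D w w) ∧
      (∀ a b, (a ≠ b ∧ ∃ w, D a w ∧ D b w) ↔
        ∃ u v, a = Sum.inl u ∧ b = Sum.inl v ∧ (hamming 2 q).Adj u v) :=
    ⟨myD q hq, myD_acyclic q hq, myD_comp q hq⟩
  exact ⟨hmem, Nat.sInf_le hmem⟩
end

section
/- Let n ≥ 2, q ≥ 2, and let D be an acyclic digraph with C(D) = H(n,q) ∪ I_k, with acyclic ordering z_1,...,z_k, v_1,...,v_{q^n} (isolated vertices first). For U_i = {v_1,...,v_i}, the number of maximal cliques of H(n,q) meeting U_i is at most k + i - 1. -/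
/-- A line in direction j through x. -/
def lineThru {n q : ℕ} (j : Fin n) (x : Fin n → Fin q) : Set (Fin n → Fin q) :=
  {p | ∀ m, m ≠ j → p m = x m}

theorem hamming_adj_iff {n q : ℕ} (x y : Fin n → Fin q) :
    (hamming n q).Adj x y ↔ ∃ j, x j ≠ y j ∧ ∀ m, m ≠ j → x m = y m := by
  show hammingDist x y = 1 ↔ _
  rw [hammingDist, Finset.card_eq_one]
  constructor
  · rintro ⟨j, hj⟩
    have hjmem : x j ≠ y j := by
      have : j ∈ Finset.univ.filter fun i => x i ≠ y i := hj ▸ Finset.mem_singleton_self j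
      simpa using this
    have hmem : ∀ m, x m ≠ y m → m = j := fun m h => by
      have : m ∈ Finset.univ.filter fun i => x i ≠ y i := by simp [h]
      rw [hj] at this; simpa using this
    exact ⟨j, hjmem, fun m hm => by
      by_contra h; exact hm (hmem m h)⟩
  · rintro ⟨j, h1, h2⟩
    refine ⟨j, ?_⟩
    ext m
    simp only [Finset.mem_filter, Finset.mem_univ, true_and, Finset.mem_singleton]
    constructor
    · intro h; by_contra hm; exact h (h2 m hm)
    · rintro rfl; exact h1

theorem mem_line_of_adj {n q : ℕ} {j : Fin n} {x y z : Fin n → Fin q}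
    (hxyj : x j ≠ y j) (hxy : ∀ m, m ≠ j → x m = y m)
    (h : z = x ∨ z = y ∨ ((hamming n q).Adj z x ∧ (hamming n q).Adj z y)) :
    z ∈ lineThru j x := by
  rcases h with rfl | rfl | ⟨hzx, hzy⟩
  · exact fun m _ => rfl
  · exact fun m hm => (hxy m hm).symm
  · obtain ⟨jx, hjx1, hjx2⟩ := (hamming_adj_iff z x).mp hzx
    obtain ⟨jy, hjy1, hjy2⟩ := (hamming_adj_iff z y).mp hzy
    by_cases hj : jx = j
    · subst hj; exact fun m hm => hjx2 m hm
    · exfalso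
      have hzj : z j = x j := hjx2 j (fun h => hj h.symm)
      have hjy : jy = j := by
        by_contra h
        have := hjy2 j (fun h' => h h'.symm)
        exact hxyj (hzj ▸ this ▸ rfl)
      subst hjy
      have : z jx = y jx := hjy2 jx hj
      have : z jx = x jx := this.trans (hxy jx hj).symm
      exact hjx1 this

theorem line_isClique {n q : ℕ} (j : Fin n) (x : Fin n → Fin q) :
    (hamming n q).IsClique (lineThru j x) := by
  intro p hp r hr hne
  rw [hamming_adj_iff]
  refine ⟨j, ?_, fun m hm => (hp m hm).trans (hr m hm).symm⟩
  intro h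
  apply hne
  funext m
  by_cases hm : m = j
  · subst hm; exact h
  · exact (hp m hm).trans (hr m hm).symm

theorem maxclique_eq_line {n q : ℕ} {S : Set (Fin n → Fin q)} {j : Fin n}
    {x y : Fin n → Fin q}
    (hS : (hamming n q).IsClique S)
    (hmax : ∀ T, (hamming n q).IsClique T → S ⊆ T → T = S)
    (hxS : x ∈ S) (hyS : y ∈ S) (hne : x ≠ y)
    (hxyj : x j ≠ y j) (hxy : ∀ m, m ≠ j → x m = y m) :
    S = lineThru j x := by
  have hsub : S ⊆ lineThru j x := by
    intro z hz
    apply mem_line_of_adj hxyj hxy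
    by_cases h1 : z = x
    · exact Or.inl h1
    by_cases h2 : z = y
    · exact Or.inr (Or.inl h2)
    exact Or.inr (Or.inr ⟨hS hz hxS h1, hS hz hyS h2⟩)
  exact (hmax _ (line_isClique j x) hsub).symm

/-- Lemma 7 of the paper: if D is an acyclic digraph with C(D) = H(n,q) ∪ I_k and an
acyclic ordering listing the k isolated vertices first, then for 1 ≤ i ≤ qⁿ the number
of maximal cliques of H(n,q) meeting the first i vertices of H(n,q) is at most k+i-1. -/
theorem maximal_cliques_meeting_initial_segment (n q k : ℕ) (hn : 2 ≤ n) (hq : 2 ≤ q)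
    (D : ((Fin n → Fin q) ⊕ Fin k) → ((Fin n → Fin q) ⊕ Fin k) → Prop)
    (hacyc : ∀ w, ¬ Relation.TransGen D w w)
    (hcomp : ∀ a b, (a ≠ b ∧ ∃ w, D a w ∧ D b w) ↔
      ∃ u v, a = Sum.inl u ∧ b = Sum.inl v ∧ (hamming n q).Adj u v)
    (f : ((Fin n → Fin q) ⊕ Fin k) ≃ Fin (k + q ^ n))
    (hord : ∀ a b, D a b → (f b : ℕ) < (f a : ℕ))
    (hiso : ∀ z : Fin k, (f (Sum.inr z) : ℕ) < k)
    (i : ℕ) (hi1 : 1 ≤ i) (hi2 : i ≤ q ^ n) :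
    {S : Set (Fin n → Fin q) |
        ((hamming n q).IsClique S ∧
          (∀ T, (hamming n q).IsClique T → S ⊆ T → T = S)) ∧
        ∃ x ∈ S, (f (Sum.inl x) : ℕ) < k + i}.ncard ≤ k + i - 1 := by
  set s := {S : Set (Fin n → Fin q) |
        ((hamming n q).IsClique S ∧
          (∀ T, (hamming n q).IsClique T → S ⊆ T → T = S)) ∧
        ∃ x ∈ S, (f (Sum.inl x) : ℕ) < k + i} with hs
  -- helper: two distinct vertices with a common prey are adjacent hamming vertices
  have hadj : ∀ (u v : Fin n → Fin q) (w : (Fin n → Fin q) ⊕ Fin k),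
      u ≠ v → D (Sum.inl u) w → D (Sum.inl v) w → (hamming n q).Adj u v := by
    intro u v w huv h1 h2
    obtain ⟨u', v', hu', hv', hadj⟩ := (hcomp (Sum.inl u) (Sum.inl v)).mp
      ⟨fun h => huv (Sum.inl.inj h), w, h1, h2⟩
    rw [Sum.inl.injEq] at hu' hv'
    subst hu'; subst hv'; exact hadj
  have key : ∀ S : Set (Fin n → Fin q), ∃ w : (Fin n → Fin q) ⊕ Fin k, S ∈ s →
      (f w : ℕ) < k + i - 1 ∧ ∃ x y, x ∈ S ∧ y ∈ S ∧ x ≠ y ∧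
        D (Sum.inl x) w ∧ D (Sum.inl y) w := by
    intro S
    by_cases hS : S ∈ s
    swap
    · exact ⟨f.symm ⟨0, by positivity⟩, fun h => absurd h hS⟩
    obtain ⟨⟨hcl, hmax⟩, x, hxS, hxlt⟩ := hS
    -- find a second element of S
    have hy : ∃ y ∈ S, y ≠ x := by
      by_contra h
      push_neg at h
      have hj0 : (0 : ℕ) < n := by omega
      set j0 : Fin n := ⟨0, hj0⟩
      have : Nontrivial (Fin q) := Fin.nontrivial_iff_two_le.mpr hq
      obtain ⟨c, hc⟩ := exists_ne (x j0)
      set y' := Function.update x j0 c with hy'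
      have hadjxy : (hamming n q).Adj x y' := by
        rw [hamming_adj_iff]
        refine ⟨j0, ?_, fun m hm => ?_⟩
        · simp [hy', Function.update_self]; exact fun h' => hc h'.symm
        · simp [hy', Function.update_of_ne hm]
      have hT : (hamming n q).IsClique ({x, y'} : Set (Fin n → Fin q)) := by
        apply SimpleGraph.isClique_pair.mpr
        exact fun _ => hadjxy
      have hsub : S ⊆ {x, y'} := by
        intro z hz; left; exact h z hz
      have := hmax _ hT hsub
      have hy'S : y' ∈ S := this ▸ (by right; rfl)
      have := h y' hy'S
      apply hadjxy.ne
      exact this.symm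
    obtain ⟨y, hyS, hyx⟩ := hy
    have hadjxy : (hamming n q).Adj x y := hcl hxS hyS (fun h => hyx h.symm)
    obtain ⟨hne, w, hw1, hw2⟩ := (hcomp (Sum.inl x) (Sum.inl y)).mpr
      ⟨x, y, rfl, rfl, hadjxy⟩
    refine ⟨w, fun _ => ⟨?_, x, y, hxS, hyS, fun h => hyx h.symm, hw1, hw2⟩⟩
    have := hord _ _ hw1
    omega
  choose g hg using key
  have hcard : ((Finset.range (k + i - 1) : Finset ℕ) : Set ℕ).ncard = k + i - 1 := by
    rw [Set.ncard_coe_finset, Finset.card_range]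
  rw [← hcard]
  apply Set.ncard_le_ncard_of_injOn (fun S => (f (g S) : ℕ))
  · intro S hSs
    simp only [Finset.coe_range, Set.mem_Iio]
    exact (hg S hSs).1
  · intro S hSs S' hS's heq
    have hgw : g S = g S' := f.injective (Fin.ext heq)
    obtain ⟨_, x, y, hxS, hyS, hxy, hw1, hw2⟩ := hg S hSs
    obtain ⟨_, x', y', hx'S, hy'S, hxy', hw1', hw2'⟩ := hg S' hS's
    rw [hgw] at hw1 hw2
    obtain ⟨hcl, hmax⟩ := hSs.1
    obtain ⟨hcl', hmax'⟩ := hS's.1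
    -- S is the line through x, y
    obtain ⟨j, hj1, hj2⟩ := (hamming_adj_iff x y).mp (hadj x y _ hxy hw1 hw2)
    have hSline : S = lineThru j x := maxclique_eq_line hcl hmax hxS hyS hxy hj1 hj2
    -- x' and y' lie on this line
    have hx'line : x' ∈ lineThru j x := by
      apply mem_line_of_adj hj1 hj2
      by_cases h1 : x' = x
      · exact Or.inl h1
      by_cases h2 : x' = y
      · exact Or.inr (Or.inl h2)
      exact Or.inr (Or.inr ⟨hadj _ _ _ h1 hw1' hw1, hadj _ _ _ h2 hw1' hw2⟩)
    have hy'line : y' ∈ lineThru j x := by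
      apply mem_line_of_adj hj1 hj2
      by_cases h1 : y' = x
      · exact Or.inl h1
      by_cases h2 : y' = y
      · exact Or.inr (Or.inl h2)
      exact Or.inr (Or.inr ⟨hadj _ _ _ h1 hw2' hw1, hadj _ _ _ h2 hw2' hw2⟩)
    -- x' and y' differ exactly at j
    have hagree : ∀ m, m ≠ j → x' m = y' m := fun m hm =>
      (hx'line m hm).trans (hy'line m hm).symm
    have hdiff : x' j ≠ y' j := by
      intro h
      apply hxy'
      funext m
      by_cases hm : m = j
      · subst hm; exact h
      · exact hagree m hm
    have hS'line : S' = lineThru j x' :=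
      maxclique_eq_line hcl' hmax' hx'S hy'S hxy' hdiff hagree
    rw [hSline, hS'line]
    ext p
    constructor
    · intro hp m hm; exact (hp m hm).trans (hx'line m hm).symm
    · intro hp m hm; exact (hp m hm).trans (hx'line m hm)
end

section
/- For any q_1, q_2, q_3 ≥ 2, there exists an acyclic digraph D whose competition graph is (K_{q_1} □ K_{q_2} □ K_{q_3}) ∪ I_6 and such that the family of in-neighborhoods of size at least 2 equals the family of maximal cliques of K_{q_1} □ K_{q_2} □ K_{q_3}; consequently k(K_{q_1} □ K_{q_2} □ K_{q_3}) ≤ 6. -/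
/-- The Cartesian product K_{q₁} □ K_{q₂} □ K_{q₃}: triples adjacent iff they
differ in exactly one coordinate. -/
def rook3 (q₁ q₂ q₃ : ℕ) : SimpleGraph (Fin q₁ × Fin q₂ × Fin q₃) where
  Adj x y := x ≠ y ∧
    ((x.1 = y.1 ∧ x.2.1 = y.2.1) ∨ (x.1 = y.1 ∧ x.2.2 = y.2.2) ∨
      (x.2.1 = y.2.1 ∧ x.2.2 = y.2.2))
  symm := by
    constructor
    rintro x y ⟨h1, h2⟩
    exact ⟨Ne.symm h1, by tauto⟩
  loopless := by constructor; rintro x ⟨h, -⟩; exact h rfl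


inductive Ln3 : Type where
  | A (b c : ℕ)
  | B (a c : ℕ)
  | C (a b : ℕ)

def memL3 : Ln3 → ℕ × ℕ × ℕ → Prop
  | .A b c, x => x.2.1 = b ∧ x.2.2 = c
  | .B a c, x => x.1 = a ∧ x.2.2 = c
  | .C a b, x => x.1 = a ∧ x.2.1 = b

def lineOf3 (q₁ q₂ q₃ : ℕ) (x : ℕ × ℕ × ℕ) : Option Ln3 :=
  if x.1 = 0 then
    if x.2.1 = 0 then
      if x.2.2 = 0 then some (.C 0 1) else some (.B 1 x.2.2)
    else if x.2.1 = 1 then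
      if x.2.2 = q₃ - 1 then
        if 3 ≤ q₂ then some (.C 0 2) else if 3 ≤ q₁ then some (.B 2 0) else none
      else some (.A 0 (x.2.2 + 1))
    else
      if x.2.2 = 0 then some (.C 1 x.2.1)
      else if x.2.2 = q₃ - 1 then
        if x.2.1 ≤ q₂ - 2 then some (.C 0 (x.2.1 + 1))
        else if 3 ≤ q₁ then some (.B 2 0) else none
      else none
  else if x.1 = 1 then
    if x.2.1 = 0 then
      if x.2.2 = 0 then some (.C 1 1) else some (.A 1 x.2.2)
    else if x.2.1 = 1 then
      if x.2.2 = q₃ - 1 then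
        if 3 ≤ q₂ then some (.A 2 0) else if 3 ≤ q₁ then some (.C 2 0) else none
      else some (.B 0 (x.2.2 + 1))
    else
      if x.2.2 = q₃ - 1 then
        if x.2.1 ≤ q₂ - 2 then some (.A (x.2.1 + 1) 0)
        else if 3 ≤ q₁ then some (.C 2 0) else none
      else some (.A x.2.1 (x.2.2 + 1))
  else
    if x.2.1 = 0 then
      if x.2.2 = q₃ - 1 then some (.C x.1 1) else some (.B x.1 (x.2.2 + 1))
    else
      if x.2.2 = q₃ - 1 then
        if x.2.1 ≤ q₂ - 2 then some (.C x.1 (x.2.1 + 1))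
        else if x.1 ≤ q₁ - 2 then some (.C (x.1 + 1) 0) else none
      else if x.2.2 = q₃ - 2 ∧ x.2.1 = q₂ - 1 then
        if x.1 ≤ q₁ - 2 then some (.B (x.1 + 1) 0) else none
      else none

def rk3 (q₂ q₃ : ℕ) (x : ℕ × ℕ × ℕ) : ℕ :=
  if x.1 ≤ 1 then
    if x.2.1 ≤ 1 then 4 * x.2.2 + 2 * x.2.1 + x.1 + 1
    else 2 * q₃ * x.2.1 + 2 * x.2.2 + x.1 + 1
  else q₂ * q₃ * x.1 + q₃ * x.2.1 + x.2.2 + 1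

lemma rk3_pos (q₂ q₃ : ℕ) (x : ℕ × ℕ × ℕ) : 1 ≤ rk3 q₂ q₃ x := by
  unfold rk3; split_ifs <;> omega

set_option maxHeartbeats 4000000 in
lemma rank_core (q₁ q₂ q₃ : ℕ) (h₁ : 2 ≤ q₁) (h₂ : 2 ≤ q₂) (h₃ : 2 ≤ q₃)
    (α β γ a b c : ℕ) (hα : α < q₁) (hβ : β < q₂) (hγ : γ < q₃)
    (ha : a < q₁) (hb : b < q₂) (hc : c < q₃)
    (ℓ : Ln3) (h : lineOf3 q₁ q₂ q₃ (α, β, γ) = some ℓ)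
    (hm : memL3 ℓ (a, b, c)) :
    rk3 q₂ q₃ (α, β, γ) < rk3 q₂ q₃ (a, b, c) := by
  unfold lineOf3 at h
  simp only at h
  split_ifs at h <;>
    first
    | (exact Option.noConfusion h)
    | (injection h with h; subst h; simp only [memL3] at hm;
       obtain ⟨hm1, hm2⟩ := hm;
       unfold rk3; simp only; split_ifs <;>
         first
         | omega
         | nlinarith [Nat.mul_le_mul (le_refl q₃) (show β + 1 ≤ q₂ by omega),
             Nat.mul_le_mul (le_refl q₃) (show b + 1 ≤ q₂ by omega),
             Nat.mul_le_mul (show 2 ≤ q₂ by omega) (le_refl q₃),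
             Nat.mul_le_mul (le_refl (q₂ * q₃)) (show 2 ≤ a by omega)]
         | nlinarith [Nat.mul_le_mul (le_refl q₃) (show β + 1 ≤ q₂ by omega),
             Nat.mul_le_mul (le_refl q₃) (show b + 1 ≤ q₂ by omega),
             Nat.mul_le_mul (show 2 ≤ q₂ by omega) (le_refl q₃)])

def valid3 (q₁ q₂ q₃ : ℕ) : Ln3 → Prop
  | .A b c => b < q₂ ∧ c < q₃
  | .B a c => a < q₁ ∧ c < q₃
  | .C a b => a < q₁ ∧ b < q₂

lemma lineOf3_valid (q₁ q₂ q₃ : ℕ) (h₁ : 2 ≤ q₁) (h₂ : 2 ≤ q₂) (h₃ : 2 ≤ q₃)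
    (α β γ : ℕ) (hα : α < q₁) (hβ : β < q₂) (hγ : γ < q₃) (ℓ : Ln3)
    (h : lineOf3 q₁ q₂ q₃ (α, β, γ) = some ℓ) : valid3 q₁ q₂ q₃ ℓ := by
  unfold lineOf3 at h
  simp only at h
  split_ifs at h <;>
    first
    | exact Option.noConfusion h
    | (injection h with h; subst h; simp only [valid3]; omega)

abbrev coW {q₁ q₂ q₃ : ℕ} (v : Fin q₁ × Fin q₂ × Fin q₃) : ℕ × ℕ × ℕ :=
  (v.1.1, v.2.1.1, v.2.2.1)

def lineOfW3 (q₁ q₂ q₃ : ℕ) (w : (Fin q₁ × Fin q₂ × Fin q₃) ⊕ Fin 6) : Option Ln3 :=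
  match w with
  | .inl v => lineOf3 q₁ q₂ q₃ (coW v)
  | .inr j =>
      some (if j.1 = 0 then .A 0 0 else if j.1 = 1 then .B 0 0 else if j.1 = 2 then .C 0 0
        else if j.1 = 3 then .B 1 0 else if j.1 = 4 then .C 1 0 else .A 1 0)

def D3 (q₁ q₂ q₃ : ℕ) (u w : (Fin q₁ × Fin q₂ × Fin q₃) ⊕ Fin 6) : Prop :=
  ∃ ℓ, lineOfW3 q₁ q₂ q₃ w = some ℓ ∧ ∃ x, u = Sum.inl x ∧ memL3 ℓ (coW x)

def rkW3 (q₁ q₂ q₃ : ℕ) (w : (Fin q₁ × Fin q₂ × Fin q₃) ⊕ Fin 6) : ℕ :=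
  match w with
  | .inl v => rk3 q₂ q₃ (coW v)
  | .inr _ => 0

lemma lineOfW3_valid (q₁ q₂ q₃ : ℕ) (h₁ : 2 ≤ q₁) (h₂ : 2 ≤ q₂) (h₃ : 2 ≤ q₃)
    (w : (Fin q₁ × Fin q₂ × Fin q₃) ⊕ Fin 6) (ℓ : Ln3)
    (h : lineOfW3 q₁ q₂ q₃ w = some ℓ) : valid3 q₁ q₂ q₃ ℓ := by
  cases w with
  | inl v =>
      exact lineOf3_valid q₁ q₂ q₃ h₁ h₂ h₃ v.1.1 v.2.1.1 v.2.2.1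
        v.1.isLt v.2.1.isLt v.2.2.isLt ℓ h
  | inr j =>
      simp only [lineOfW3, Option.some.injEq] at h
      split_ifs at h <;> (subst h; simp only [valid3]; omega)

lemma inNbhd_eq (q₁ q₂ q₃ : ℕ) (w : (Fin q₁ × Fin q₂ × Fin q₃) ⊕ Fin 6) (ℓ : Ln3)
    (hw : lineOfW3 q₁ q₂ q₃ w = some ℓ) :
    {u | D3 q₁ q₂ q₃ u w} = {u | ∃ x, u = Sum.inl x ∧ memL3 ℓ (coW x)} := by
  ext u
  simp only [Set.mem_setOf_eq, D3, hw, Option.some.injEq]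
  constructor
  · rintro ⟨ℓ', rfl, hx⟩; exact hx
  · intro hx; exact ⟨ℓ, rfl, hx⟩

def notSpecial : Ln3 → Prop
  | .A b c => ¬(b ≤ 1 ∧ c = 0)
  | .B a c => ¬(a ≤ 1 ∧ c = 0)
  | .C a b => ¬(a ≤ 1 ∧ b = 0)

set_option maxHeartbeats 1600000 in
lemma lineOf3_surj (q₁ q₂ q₃ : ℕ) (h₁ : 2 ≤ q₁) (h₂ : 2 ≤ q₂) (h₃ : 2 ≤ q₃)
    (ℓ : Ln3) (hv : valid3 q₁ q₂ q₃ ℓ) (hns : notSpecial ℓ) :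
    ∃ α β γ, α < q₁ ∧ β < q₂ ∧ γ < q₃ ∧ lineOf3 q₁ q₂ q₃ (α, β, γ) = some ℓ := by
  have tac : True := trivial
  cases ℓ with
  | A b c =>
    obtain ⟨hb, hc⟩ := hv
    simp only [notSpecial] at hns
    rcases Nat.lt_or_ge b 2 with hb2 | hb2
    · -- b ∈ {0,1}, c ≥ 1
      have hc1 : 1 ≤ c := by omega
      rcases (show b = 0 ∨ b = 1 by omega) with rfl | rfl
      · refine ⟨0, 1, c - 1, by omega, by omega, by omega, ?_⟩
        unfold lineOf3; simp only
        split_ifs <;>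
          first
          | (exfalso; first | exact ‹False› | exact ‹¬True› trivial | exact ‹¬(True ∧ True)› ⟨trivial, trivial⟩ | omega)
          | (simp only [Option.some.injEq, Ln3.A.injEq, Ln3.B.injEq, Ln3.C.injEq, true_and,
              and_true] <;> omega)
      · refine ⟨1, 0, c, by omega, by omega, by omega, ?_⟩
        unfold lineOf3; simp only
        split_ifs <;>
          first
          | (exfalso; first | exact ‹False› | exact ‹¬True› trivial | exact ‹¬(True ∧ True)› ⟨trivial, trivial⟩ | omega)
          | (simp only [Option.some.injEq, Ln3.A.injEq, Ln3.B.injEq, Ln3.C.injEq, true_and,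
              and_true] <;> omega)
    · rcases Nat.eq_zero_or_pos c with rfl | hc1
      · refine ⟨1, b - 1, q₃ - 1, by omega, by omega, by omega, ?_⟩
        unfold lineOf3; simp only
        split_ifs <;>
          first
          | (exfalso; first | exact ‹False› | exact ‹¬True› trivial | exact ‹¬(True ∧ True)› ⟨trivial, trivial⟩ | omega)
          | (simp only [Option.some.injEq, Ln3.A.injEq, Ln3.B.injEq, Ln3.C.injEq, true_and,
              and_true] <;> omega)
      · refine ⟨1, b, c - 1, by omega, by omega, by omega, ?_⟩
        unfold lineOf3; simp only
        split_ifs <;>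
          first
          | (exfalso; first | exact ‹False› | exact ‹¬True› trivial | exact ‹¬(True ∧ True)› ⟨trivial, trivial⟩ | omega)
          | (simp only [Option.some.injEq, Ln3.A.injEq, Ln3.B.injEq, Ln3.C.injEq, true_and,
              and_true] <;> omega)
  | B a c =>
    obtain ⟨ha, hc⟩ := hv
    simp only [notSpecial] at hns
    rcases Nat.lt_or_ge a 2 with ha2 | ha2
    · have hc1 : 1 ≤ c := by omega
      rcases (show a = 0 ∨ a = 1 by omega) with rfl | rfl
      · refine ⟨1, 1, c - 1, by omega, by omega, by omega, ?_⟩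
        unfold lineOf3; simp only
        split_ifs <;>
          first
          | (exfalso; first | exact ‹False› | exact ‹¬True› trivial | exact ‹¬(True ∧ True)› ⟨trivial, trivial⟩ | omega)
          | (simp only [Option.some.injEq, Ln3.A.injEq, Ln3.B.injEq, Ln3.C.injEq, true_and,
              and_true] <;> omega)
      · refine ⟨0, 0, c, by omega, by omega, by omega, ?_⟩
        unfold lineOf3; simp only
        split_ifs <;>
          first
          | (exfalso; first | exact ‹False› | exact ‹¬True› trivial | exact ‹¬(True ∧ True)› ⟨trivial, trivial⟩ | omega)
          | (simp only [Option.some.injEq, Ln3.A.injEq, Ln3.B.injEq, Ln3.C.injEq, true_and,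
              and_true] <;> omega)
    · rcases Nat.eq_zero_or_pos c with rfl | hc1
      · rcases (show a = 2 ∨ 3 ≤ a by omega) with rfl | ha3
        · refine ⟨0, q₂ - 1, q₃ - 1, by omega, by omega, by omega, ?_⟩
          unfold lineOf3; simp only
          split_ifs <;>
            first
            | (exfalso; first | exact ‹False› | exact ‹¬True› trivial | exact ‹¬(True ∧ True)› ⟨trivial, trivial⟩ | omega)
            | (simp only [Option.some.injEq, Ln3.A.injEq, Ln3.B.injEq, Ln3.C.injEq, true_and,
                and_true] <;> omega)
        · refine ⟨a - 1, q₂ - 1, q₃ - 2, by omega, by omega, by omega, ?_⟩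
          unfold lineOf3; simp only
          split_ifs <;>
            first
            | (exfalso; first | exact ‹False› | exact ‹¬True› trivial | exact ‹¬(True ∧ True)› ⟨trivial, trivial⟩ | omega)
            | (simp only [Option.some.injEq, Ln3.A.injEq, Ln3.B.injEq, Ln3.C.injEq, true_and,
                and_true] <;> omega)
      · refine ⟨a, 0, c - 1, by omega, by omega, by omega, ?_⟩
        unfold lineOf3; simp only
        split_ifs <;>
          first
          | (exfalso; first | exact ‹False› | exact ‹¬True› trivial | exact ‹¬(True ∧ True)› ⟨trivial, trivial⟩ | omega)
          | (simp only [Option.some.injEq, Ln3.A.injEq, Ln3.B.injEq, Ln3.C.injEq, true_and,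
              and_true] <;> omega)
  | C a b =>
    obtain ⟨ha, hb⟩ := hv
    simp only [notSpecial] at hns
    rcases Nat.lt_or_ge a 2 with ha2 | ha2
    · have hb1 : 1 ≤ b := by omega
      rcases (show a = 0 ∨ a = 1 by omega) with rfl | rfl
      · rcases (show b = 1 ∨ 2 ≤ b by omega) with rfl | hb2
        · refine ⟨0, 0, 0, by omega, by omega, by omega, ?_⟩
          unfold lineOf3; simp only
          split_ifs <;>
            first
            | (exfalso; first | exact ‹False› | exact ‹¬True› trivial | exact ‹¬(True ∧ True)› ⟨trivial, trivial⟩ | omega)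
            | (simp only [Option.some.injEq, Ln3.A.injEq, Ln3.B.injEq, Ln3.C.injEq, true_and,
                and_true] <;> omega)
        · refine ⟨0, b - 1, q₃ - 1, by omega, by omega, by omega, ?_⟩
          unfold lineOf3; simp only
          split_ifs <;>
            first
            | (exfalso; first | exact ‹False› | exact ‹¬True› trivial | exact ‹¬(True ∧ True)› ⟨trivial, trivial⟩ | omega)
            | (simp only [Option.some.injEq, Ln3.A.injEq, Ln3.B.injEq, Ln3.C.injEq, true_and,
                and_true] <;> omega)
      · rcases (show b = 1 ∨ 2 ≤ b by omega) with rfl | hb2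
        · refine ⟨1, 0, 0, by omega, by omega, by omega, ?_⟩
          unfold lineOf3; simp only
          split_ifs <;>
            first
            | (exfalso; first | exact ‹False› | exact ‹¬True› trivial | exact ‹¬(True ∧ True)› ⟨trivial, trivial⟩ | omega)
            | (simp only [Option.some.injEq, Ln3.A.injEq, Ln3.B.injEq, Ln3.C.injEq, true_and,
                and_true] <;> omega)
        · refine ⟨0, b, 0, by omega, by omega, by omega, ?_⟩
          unfold lineOf3; simp only
          split_ifs <;>
            first
            | (exfalso; first | exact ‹False› | exact ‹¬True› trivial | exact ‹¬(True ∧ True)› ⟨trivial, trivial⟩ | omega)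
            | (simp only [Option.some.injEq, Ln3.A.injEq, Ln3.B.injEq, Ln3.C.injEq, true_and,
                and_true] <;> omega)
    · rcases Nat.eq_zero_or_pos b with rfl | hb1
      · refine ⟨a - 1, q₂ - 1, q₃ - 1, by omega, by omega, by omega, ?_⟩
        unfold lineOf3; simp only
        split_ifs <;>
          first
          | (exfalso; first | exact ‹False› | exact ‹¬True› trivial | exact ‹¬(True ∧ True)› ⟨trivial, trivial⟩ | omega)
          | (simp only [Option.some.injEq, Ln3.A.injEq, Ln3.B.injEq, Ln3.C.injEq, true_and,
              and_true] <;> omega)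
      · refine ⟨a, b - 1, q₃ - 1, by omega, by omega, by omega, ?_⟩
        unfold lineOf3; simp only
        split_ifs <;>
          first
          | (exfalso; first | exact ‹False› | exact ‹¬True› trivial | exact ‹¬(True ∧ True)› ⟨trivial, trivial⟩ | omega)
          | (simp only [Option.some.injEq, Ln3.A.injEq, Ln3.B.injEq, Ln3.C.injEq, true_and,
              and_true] <;> omega)

set_option maxHeartbeats 800000 in
lemma exists_prey (q₁ q₂ q₃ : ℕ) (h₁ : 2 ≤ q₁) (h₂ : 2 ≤ q₂) (h₃ : 2 ≤ q₃)
    (ℓ : Ln3) (hv : valid3 q₁ q₂ q₃ ℓ) :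
    ∃ w, lineOfW3 q₁ q₂ q₃ w = some ℓ := by
  by_cases hns : notSpecial ℓ
  · obtain ⟨α, β, γ, hα, hβ, hγ, hl⟩ := lineOf3_surj q₁ q₂ q₃ h₁ h₂ h₃ ℓ hv hns
    exact ⟨Sum.inl (⟨α, hα⟩, ⟨β, hβ⟩, ⟨γ, hγ⟩), hl⟩
  · cases ℓ with
    | A b c =>
      simp only [notSpecial, not_not] at hns
      obtain ⟨hb, rfl⟩ := hns
      rcases (show b = 0 ∨ b = 1 by omega) with rfl | rfl
      · exact ⟨Sum.inr 0, rfl⟩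
      · exact ⟨Sum.inr 5, rfl⟩
    | B a c =>
      simp only [notSpecial, not_not] at hns
      obtain ⟨ha, rfl⟩ := hns
      rcases (show a = 0 ∨ a = 1 by omega) with rfl | rfl
      · exact ⟨Sum.inr 1, rfl⟩
      · exact ⟨Sum.inr 3, rfl⟩
    | C a b =>
      simp only [notSpecial, not_not] at hns
      obtain ⟨ha, rfl⟩ := hns
      rcases (show a = 0 ∨ a = 1 by omega) with rfl | rfl
      · exact ⟨Sum.inr 2, rfl⟩
      · exact ⟨Sum.inr 4, rfl⟩

lemma setEqA (q₁ q₂ q₃ : ℕ) (b c : ℕ) (hb : b < q₂) (hc : c < q₃) :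
    {u : (Fin q₁ × Fin q₂ × Fin q₃) ⊕ Fin 6 | ∃ x, u = Sum.inl x ∧ memL3 (.A b c) (coW x)} =
    {u | ∃ x, u = Sum.inl x ∧ x.2.1 = (⟨b, hb⟩ : Fin q₂) ∧ x.2.2 = (⟨c, hc⟩ : Fin q₃)} := by
  ext u
  simp only [Set.mem_setOf_eq, memL3, coW]
  constructor
  · rintro ⟨x, rfl, hx1, hx2⟩; exact ⟨x, rfl, Fin.ext hx1, Fin.ext hx2⟩
  · rintro ⟨x, rfl, h1, h2⟩; exact ⟨x, rfl, by rw [h1], by rw [h2]⟩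

lemma setEqB (q₁ q₂ q₃ : ℕ) (a c : ℕ) (ha : a < q₁) (hc : c < q₃) :
    {u : (Fin q₁ × Fin q₂ × Fin q₃) ⊕ Fin 6 | ∃ x, u = Sum.inl x ∧ memL3 (.B a c) (coW x)} =
    {u | ∃ x, u = Sum.inl x ∧ x.1 = (⟨a, ha⟩ : Fin q₁) ∧ x.2.2 = (⟨c, hc⟩ : Fin q₃)} := by
  ext u
  simp only [Set.mem_setOf_eq, memL3, coW]
  constructor
  · rintro ⟨x, rfl, hx1, hx2⟩; exact ⟨x, rfl, Fin.ext hx1, Fin.ext hx2⟩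
  · rintro ⟨x, rfl, h1, h2⟩; exact ⟨x, rfl, by rw [h1], by rw [h2]⟩

lemma setEqC (q₁ q₂ q₃ : ℕ) (a b : ℕ) (ha : a < q₁) (hb : b < q₂) :
    {u : (Fin q₁ × Fin q₂ × Fin q₃) ⊕ Fin 6 | ∃ x, u = Sum.inl x ∧ memL3 (.C a b) (coW x)} =
    {u | ∃ x, u = Sum.inl x ∧ x.1 = (⟨a, ha⟩ : Fin q₁) ∧ x.2.1 = (⟨b, hb⟩ : Fin q₂)} := by
  ext u
  simp only [Set.mem_setOf_eq, memL3, coW]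
  constructor
  · rintro ⟨x, rfl, hx1, hx2⟩; exact ⟨x, rfl, Fin.ext hx1, Fin.ext hx2⟩
  · rintro ⟨x, rfl, h1, h2⟩; exact ⟨x, rfl, by rw [h1], by rw [h2]⟩

theorem rook3_compnum_upper' (q₁ q₂ q₃ : ℕ) (h₁ : 2 ≤ q₁) (h₂ : 2 ≤ q₂) (h₃ : 2 ≤ q₃) :
    (∀ w, ¬ Relation.TransGen (D3 q₁ q₂ q₃) w w) ∧
    (∀ a b, (a ≠ b ∧ ∃ w, D3 q₁ q₂ q₃ a w ∧ D3 q₁ q₂ q₃ b w) ↔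
      ∃ u v, a = Sum.inl u ∧ b = Sum.inl v ∧ (rook3 q₁ q₂ q₃).Adj u v) ∧
    {S : Set ((Fin q₁ × Fin q₂ × Fin q₃) ⊕ Fin 6) |
        (∃ w, S = {u | D3 q₁ q₂ q₃ u w}) ∧ 2 ≤ S.ncard} =
      {S | (∃ p₂ p₃, S = {w | ∃ x, w = Sum.inl x ∧ x.2.1 = p₂ ∧ x.2.2 = p₃}) ∨
           (∃ p₁ p₃, S = {w | ∃ x, w = Sum.inl x ∧ x.1 = p₁ ∧ x.2.2 = p₃}) ∨
           (∃ p₁ p₂, S = {w | ∃ x, w = Sum.inl x ∧ x.1 = p₁ ∧ x.2.1 = p₂})} := by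
  have hrk : ∀ u w, D3 q₁ q₂ q₃ u w → rkW3 q₁ q₂ q₃ w < rkW3 q₁ q₂ q₃ u := by
    rintro u w ⟨ℓ, hw, x, rfl, hx⟩
    cases w with
    | inr j =>
        have := rk3_pos q₂ q₃ (coW x)
        simp only [rkW3]
        omega
    | inl v =>
        exact rank_core q₁ q₂ q₃ h₁ h₂ h₃ v.1.1 v.2.1.1 v.2.2.1 x.1.1 x.2.1.1 x.2.2.1
          v.1.isLt v.2.1.isLt v.2.2.isLt x.1.isLt x.2.1.isLt x.2.2.isLt ℓ hw hx
  refine ⟨?_, ?_, ?_⟩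
  · -- acyclicity
    have key : ∀ a b, Relation.TransGen (D3 q₁ q₂ q₃) a b →
        rkW3 q₁ q₂ q₃ b < rkW3 q₁ q₂ q₃ a := by
      intro a b h
      induction h with
      | single h => exact hrk _ _ h
      | tail _ h2 ih => exact lt_trans (hrk _ _ h2) ih
    exact fun w hw => lt_irrefl _ (key w w hw)
  · -- competition graph
    intro a b
    constructor
    · rintro ⟨hne, w, ⟨ℓ, hw, x, rfl, hx⟩, ⟨ℓ', hw', y, rfl, hy⟩⟩
      rw [hw] at hw'
      injection hw' with hℓ
      subst hℓ
      have hxy : x ≠ y := fun h => hne (by rw [h])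
      refine ⟨x, y, rfl, rfl, ?_⟩
      cases ℓ with
      | A b0 c0 =>
          obtain ⟨e1, e2⟩ := hx
          obtain ⟨f1, f2⟩ := hy
          exact ⟨hxy, Or.inr (Or.inr ⟨Fin.ext (e1.trans f1.symm), Fin.ext (e2.trans f2.symm)⟩)⟩
      | B a0 c0 =>
          obtain ⟨e1, e2⟩ := hx
          obtain ⟨f1, f2⟩ := hy
          exact ⟨hxy, Or.inr (Or.inl ⟨Fin.ext (e1.trans f1.symm), Fin.ext (e2.trans f2.symm)⟩)⟩
      | C a0 b0 =>
          obtain ⟨e1, e2⟩ := hx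
          obtain ⟨f1, f2⟩ := hy
          exact ⟨hxy, Or.inl ⟨Fin.ext (e1.trans f1.symm), Fin.ext (e2.trans f2.symm)⟩⟩
    · rintro ⟨x, y, rfl, rfl, hxy, hadj⟩
      refine ⟨fun h => hxy (Sum.inl.inj h), ?_⟩
      rcases hadj with ⟨g1, g2⟩ | ⟨g1, g2⟩ | ⟨g1, g2⟩
      · obtain ⟨w, hw⟩ := exists_prey q₁ q₂ q₃ h₁ h₂ h₃ (.C x.1.1 x.2.1.1)
          ⟨x.1.isLt, x.2.1.isLt⟩
        exact ⟨w, ⟨_, hw, x, rfl, rfl, rfl⟩, ⟨_, hw, y, rfl, by rw [g1], by rw [g2]⟩⟩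
      · obtain ⟨w, hw⟩ := exists_prey q₁ q₂ q₃ h₁ h₂ h₃ (.B x.1.1 x.2.2.1)
          ⟨x.1.isLt, x.2.2.isLt⟩
        exact ⟨w, ⟨_, hw, x, rfl, rfl, rfl⟩, ⟨_, hw, y, rfl, by rw [g1], by rw [g2]⟩⟩
      · obtain ⟨w, hw⟩ := exists_prey q₁ q₂ q₃ h₁ h₂ h₃ (.A x.2.1.1 x.2.2.1)
          ⟨x.2.1.isLt, x.2.2.isLt⟩
        exact ⟨w, ⟨_, hw, x, rfl, rfl, rfl⟩, ⟨_, hw, y, rfl, by rw [g1], by rw [g2]⟩⟩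
  · -- family of in-neighbourhoods
    ext S
    simp only [Set.mem_setOf_eq]
    constructor
    · rintro ⟨⟨w, rfl⟩, hcard⟩
      rcases hl : lineOfW3 q₁ q₂ q₃ w with _ | ℓ
      · exfalso
        have hemp : {u | D3 q₁ q₂ q₃ u w} = ∅ := by
          ext u
          simp only [Set.mem_setOf_eq, D3, hl, Set.mem_empty_iff_false, iff_false]
          rintro ⟨ℓ', hℓ', -⟩
          cases hℓ'
        rw [hemp] at hcard
        simp at hcard
      · have hv := lineOfW3_valid q₁ q₂ q₃ h₁ h₂ h₃ w ℓ hl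
        cases ℓ with
        | A b0 c0 =>
            exact Or.inl ⟨⟨b0, hv.1⟩, ⟨c0, hv.2⟩,
              (inNbhd_eq q₁ q₂ q₃ w _ hl).trans (setEqA q₁ q₂ q₃ b0 c0 hv.1 hv.2)⟩
        | B a0 c0 =>
            exact Or.inr (Or.inl ⟨⟨a0, hv.1⟩, ⟨c0, hv.2⟩,
              (inNbhd_eq q₁ q₂ q₃ w _ hl).trans (setEqB q₁ q₂ q₃ a0 c0 hv.1 hv.2)⟩)
        | C a0 b0 =>
            exact Or.inr (Or.inr ⟨⟨a0, hv.1⟩, ⟨b0, hv.2⟩,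
              (inNbhd_eq q₁ q₂ q₃ w _ hl).trans (setEqC q₁ q₂ q₃ a0 b0 hv.1 hv.2)⟩)
    · rintro (⟨p₂, p₃, rfl⟩ | ⟨p₁, p₃, rfl⟩ | ⟨p₁, p₂, rfl⟩)
      · obtain ⟨w, hw⟩ := exists_prey q₁ q₂ q₃ h₁ h₂ h₃ (.A p₂.1 p₃.1) ⟨p₂.isLt, p₃.isLt⟩
        refine ⟨⟨w, ?_⟩, ?_⟩
        · rw [inNbhd_eq q₁ q₂ q₃ w _ hw, setEqA q₁ q₂ q₃ p₂.1 p₃.1 p₂.isLt p₃.isLt]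
        · have hlt : 1 < Set.ncard {u : (Fin q₁ × Fin q₂ × Fin q₃) ⊕ Fin 6 |
              ∃ x, u = Sum.inl x ∧ x.2.1 = p₂ ∧ x.2.2 = p₃} := by
            refine (Set.one_lt_ncard (Set.toFinite _)).2
              ⟨Sum.inl (⟨0, by omega⟩, p₂, p₃), ⟨_, rfl, rfl, rfl⟩,
               Sum.inl (⟨1, by omega⟩, p₂, p₃), ⟨_, rfl, rfl, rfl⟩, ?_⟩
            simp [Prod.ext_iff, Fin.ext_iff]
          omega
      · obtain ⟨w, hw⟩ := exists_prey q₁ q₂ q₃ h₁ h₂ h₃ (.B p₁.1 p₃.1) ⟨p₁.isLt, p₃.isLt⟩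
        refine ⟨⟨w, ?_⟩, ?_⟩
        · rw [inNbhd_eq q₁ q₂ q₃ w _ hw, setEqB q₁ q₂ q₃ p₁.1 p₃.1 p₁.isLt p₃.isLt]
        · have hlt : 1 < Set.ncard {u : (Fin q₁ × Fin q₂ × Fin q₃) ⊕ Fin 6 |
              ∃ x, u = Sum.inl x ∧ x.1 = p₁ ∧ x.2.2 = p₃} := by
            refine (Set.one_lt_ncard (Set.toFinite _)).2
              ⟨Sum.inl (p₁, ⟨0, by omega⟩, p₃), ⟨_, rfl, rfl, rfl⟩,
               Sum.inl (p₁, ⟨1, by omega⟩, p₃), ⟨_, rfl, rfl, rfl⟩, ?_⟩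
            simp [Prod.ext_iff, Fin.ext_iff]
          omega
      · obtain ⟨w, hw⟩ := exists_prey q₁ q₂ q₃ h₁ h₂ h₃ (.C p₁.1 p₂.1) ⟨p₁.isLt, p₂.isLt⟩
        refine ⟨⟨w, ?_⟩, ?_⟩
        · rw [inNbhd_eq q₁ q₂ q₃ w _ hw, setEqC q₁ q₂ q₃ p₁.1 p₂.1 p₁.isLt p₂.isLt]
        · have hlt : 1 < Set.ncard {u : (Fin q₁ × Fin q₂ × Fin q₃) ⊕ Fin 6 |
              ∃ x, u = Sum.inl x ∧ x.1 = p₁ ∧ x.2.1 = p₂} := by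
            refine (Set.one_lt_ncard (Set.toFinite _)).2
              ⟨Sum.inl (p₁, p₂, ⟨0, by omega⟩), ⟨_, rfl, rfl, rfl⟩,
               Sum.inl (p₁, p₂, ⟨1, by omega⟩), ⟨_, rfl, rfl, rfl⟩, ?_⟩
            simp [Prod.ext_iff, Fin.ext_iff]
          omega


/-- For q₁,q₂,q₃ ≥ 2 there is an acyclic digraph whose competition graph is
(K_{q₁} □ K_{q₂} □ K_{q₃}) ∪ I₆ and whose in-neighborhoods of size ≥ 2 are exactly
the maximal cliques (the lines obtained by fixing two coordinates);
consequently k(K_{q₁} □ K_{q₂} □ K_{q₃}) ≤ 6. -/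
theorem rook3_compnum_upper (q₁ q₂ q₃ : ℕ) (h₁ : 2 ≤ q₁) (h₂ : 2 ≤ q₂) (h₃ : 2 ≤ q₃) :
    (∃ D : ((Fin q₁ × Fin q₂ × Fin q₃) ⊕ Fin 6) →
           ((Fin q₁ × Fin q₂ × Fin q₃) ⊕ Fin 6) → Prop,
      (∀ w, ¬ Relation.TransGen D w w) ∧
      (∀ a b, (a ≠ b ∧ ∃ w, D a w ∧ D b w) ↔
        ∃ u v, a = Sum.inl u ∧ b = Sum.inl v ∧ (rook3 q₁ q₂ q₃).Adj u v) ∧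
      {S : Set ((Fin q₁ × Fin q₂ × Fin q₃) ⊕ Fin 6) |
          (∃ w, S = {u | D u w}) ∧ 2 ≤ S.ncard} =
        {S | (∃ p₂ p₃, S = {w | ∃ x, w = Sum.inl x ∧ x.2.1 = p₂ ∧ x.2.2 = p₃}) ∨
             (∃ p₁ p₃, S = {w | ∃ x, w = Sum.inl x ∧ x.1 = p₁ ∧ x.2.2 = p₃}) ∨
             (∃ p₁ p₂, S = {w | ∃ x, w = Sum.inl x ∧ x.1 = p₁ ∧ x.2.1 = p₂})}) ∧
    CompetitionNumber (rook3 q₁ q₂ q₃) ≤ 6 := by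
  obtain ⟨hacy, hcomp, hfam⟩ := rook3_compnum_upper' q₁ q₂ q₃ h₁ h₂ h₃
  exact ⟨⟨D3 q₁ q₂ q₃, hacy, hcomp, hfam⟩, Nat.sInf_le ⟨D3 q₁ q₂ q₃, hacy, hcomp⟩⟩
end
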